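/- arXiv:2405.00173 — 2 statements merged into one kernel-verified Lean document; each statement's English description precedes it below -/
import Mathlib

section
/- Let A_Γ be any Artin group. If Γ̂ has at least three connected components, then the 2-complete Artin complex X̂_Γ is simply connected, i.e., the geometric realization of X̂_Γ is a simply connected topological space. -/
open scoped Pointwise

namespace ArtinPaper

/-! ## Artin groups of labeled defining graphs

A labeled defining graph on a vertex set `S` is encoded by a `CoxeterMatrix S`:
a symmetric matrix of naturals with `1`s on the diagonal, whose off-diagonal
entries are `≥ 2` or `0`, where `M s t = 0` encodes the label `∞` (no edge). -/

variable {S : Type u}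

/-- The alternating word `s t s t ⋯` of length `k`, as an element of the free group on `S`. -/
def braidWord (k : ℕ) (s t : S) : FreeGroup S :=
  ((List.range k).map (fun i => if i % 2 = 0 then FreeGroup.of s else FreeGroup.of t)).prod

/-- The braid relations: for each pair `s ≠ t` with finite label `m = M s t ≠ 0`, the
relator identifying the two alternating words of length `m`. -/
def artinRels (M : CoxeterMatrix S) : Set (FreeGroup S) :=
  {r | ∃ s t : S, s ≠ t ∧ M s t ≠ 0 ∧
    r = braidWord (M s t) s t * (braidWord (M s t) t s)⁻¹}

/-- The Artin group `A_Γ` of the labeled defining graph `M`. -/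
def ArtinGroup (M : CoxeterMatrix S) : Type u := PresentedGroup (artinRels M)

instance (M : CoxeterMatrix S) : Group (ArtinGroup M) := QuotientGroup.Quotient.group _

/-- The standard generator of the Artin group corresponding to a vertex `s`. -/
def artinGen (M : CoxeterMatrix S) (s : S) : ArtinGroup M := PresentedGroup.of s

/-- The standard parabolic subgroup `A_T` generated by the generators in `T`. -/
def stdParabolic (M : CoxeterMatrix S) (T : Set S) : Subgroup (ArtinGroup M) :=
  Subgroup.closure (artinGen M '' T)

/-- The labeled full subgraph spanned by a subset `U` of the vertices. -/
def restrictMatrix (M : CoxeterMatrix S) (U : Set S) : CoxeterMatrix U where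
  M := Matrix.of fun a b => M a b
  isSymm := Matrix.IsSymm.ext fun a b => M.isSymm.apply a b
  diagonal := fun a => M.diagonal a
  off_diagonal := fun a b h => M.off_diagonal a b (fun e => h (Subtype.ext e))

/-- `T ⊆ S` is of finite type if the Coxeter group of the full subgraph on `T` is finite. -/
def FiniteType (M : CoxeterMatrix S) (T : Set S) : Prop :=
  Finite (restrictMatrix M T).Group

/-- `A_Γ` is locally reducible when every finite-type triangle of `Γ` has labels `2, 2, k`. -/
def LocallyReducible (M : CoxeterMatrix S) : Prop :=
  ∀ a b c : S, a ≠ b → a ≠ c → b ≠ c →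
    M a b ≠ 0 → M a c ≠ 0 → M b c ≠ 0 →
    FiniteType M {a, b, c} →
    ((M a b = 2 ∧ M a c = 2) ∨ (M a b = 2 ∧ M b c = 2) ∨ (M a c = 2 ∧ M b c = 2))

/-- The graph `Γ̂`: same vertices as `Γ`, with exactly the edges of `Γ` labeled `2`. -/
def ghat (M : CoxeterMatrix S) : SimpleGraph S where
  Adj s t := s ≠ t ∧ M s t = 2
  symm := ⟨fun s t h => ⟨h.1.symm, (M.isSymm.apply t s).symm.trans h.2⟩⟩
  loopless := ⟨fun s h => h.1 rfl⟩

/-- `T` is (the vertex set of) a connected component of `Γ̂`. -/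
def IsComp (M : CoxeterMatrix S) (T : Set S) : Prop :=
  ∃ c : (ghat M).ConnectedComponent, T = c.supp

/-- `T ⊆ S` is 2-complete: it is a union of connected components of `Γ̂`. -/
def Is2Complete (M : CoxeterMatrix S) (T : Set S) : Prop :=
  ∀ s ∈ T, ∀ t : S, (ghat M).Reachable s t → t ∈ T

/-- The conjugate subgroup `g H g⁻¹`. -/
def conjSub {G : Type*} [Group G] (g : G) (H : Subgroup G) : Subgroup G :=
  Subgroup.map (MulAut.conj g).toMonoidHom H

/-- A parabolic subgroup of the Artin group: a conjugate of a standard parabolic subgroup. -/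
def IsParabolic (M : CoxeterMatrix S) (P : Subgroup (ArtinGroup M)) : Prop :=
  ∃ (g : ArtinGroup M) (T : Set S), P = conjSub g (stdParabolic M T)

/-- A 2-complete parabolic subgroup: a conjugate `g A_T g⁻¹` with `T` 2-complete. -/
def Is2CompleteParabolic (M : CoxeterMatrix S) (P : Subgroup (ArtinGroup M)) : Prop :=
  ∃ (g : ArtinGroup M) (T : Set S), Is2Complete M T ∧ P = conjSub g (stdParabolic M T)

/-- A subgroup `H ≤ G` is weakly malnormal if `H ∩ gHg⁻¹` is finite for some `g`. -/
def WeaklyMalnormal {G : Type*} [Group G] (H : Subgroup G) : Prop :=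
  ∃ g : G, ((H ⊓ conjSub g H : Subgroup G) : Set G).Finite


/-! ## Abstract simplicial complexes -/

/-- An abstract simplicial complex on a vertex type `V`: a downward-closed family of
finite sets of vertices (the faces/simplices). -/
structure SComplex (V : Type u) where
  faces : Set (Set V)
  finite_mem : ∀ s ∈ faces, s.Finite
  down_closed : ∀ s ∈ faces, ∀ t ⊆ s, t ∈ faces

namespace SComplex

/-- `v` is a vertex of the complex `X`. -/
def IsVertex {V : Type u} (X : SComplex V) (v : V) : Prop := {v} ∈ X.faces

/-- The link of a simplex `σ`: faces disjoint from `σ` whose union with `σ` is a face. -/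
def link {V : Type u} (X : SComplex V) (σ : Set V) : SComplex V where
  faces := {τ | Disjoint τ σ ∧ τ ∪ σ ∈ X.faces}
  finite_mem := fun τ hτ => (X.finite_mem _ hτ.2).subset Set.subset_union_left
  down_closed := fun τ hτ τ' hsub =>
    ⟨hτ.1.mono_left hsub, X.down_closed _ hτ.2 _ (Set.union_subset_union_left σ hsub)⟩

/-- A full cycle of length `n` in `X`: an embedded combinatorial circle
`f 0, f 1, …, f (n-1)` (consecutive vertices joined by edges of `X`) which moreover spans a
full subcomplex: any face of `X` with vertices on the circle is a face of the circle. -/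
def IsFullCycle {V : Type u} (X : SComplex V) (n : ℕ) (f : ZMod n → V) : Prop :=
  3 ≤ n ∧ Function.Injective f ∧
    (∀ i : ZMod n, ({f i, f (i + 1)} : Set V) ∈ X.faces) ∧
    (∀ σ ∈ X.faces, σ ⊆ Set.range f → ∃ i : ZMod n, σ ⊆ ({f i, f (i + 1)} : Set V))

/-- `SysGE X k`: the systole of `X` is at least `k`, i.e. every full cycle of `X` has
length at least `k`. -/
def SysGE {V : Type u} (X : SComplex V) (k : ℕ) : Prop :=
  ∀ (n : ℕ) (f : ZMod n → V), X.IsFullCycle n f → k ≤ n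

/-- `X` is locally 6-large: the link of every (nonempty) simplex has systole at least 6. -/
def LocallySixLarge {V : Type u} (X : SComplex V) : Prop :=
  ∀ σ ∈ X.faces, σ.Nonempty → (X.link σ).SysGE 6

/-- Two vertices are adjacent (or equal) when they span a face. -/
def Adj {V : Type u} (X : SComplex V) (u v : V) : Prop := ({u, v} : Set V) ∈ X.faces

/-- `X` is connected: any two vertices are joined by a path of edges. -/
def Connected {V : Type u} (X : SComplex V) : Prop :=
  ∀ u v : V, X.IsVertex u → X.IsVertex v → Relation.ReflTransGen X.Adj u v

/-- An edge walk in `X`: a nonempty list of vertices, consecutive ones spanning edges. -/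
def IsWalk {V : Type u} (X : SComplex V) (l : List V) : Prop :=
  l ≠ [] ∧ (∀ v ∈ l, X.IsVertex v) ∧ l.Chain' X.Adj

/-- Combinatorial homotopy of edge walks, generated by the elementary moves of deleting or
inserting a vertex `b` between consecutive vertices `a, c` whenever `{a, b, c}` is a face,
and deleting or inserting a repeated vertex. -/
inductive EHomotopic {V : Type u} (X : SComplex V) : List V → List V → Prop
  | refl (l : List V) : EHomotopic X l l
  | symm {l₁ l₂ : List V} : EHomotopic X l₁ l₂ → EHomotopic X l₂ l₁
  | trans {l₁ l₂ l₃ : List V} :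
      EHomotopic X l₁ l₂ → EHomotopic X l₂ l₃ → EHomotopic X l₁ l₃
  | triangle (p q : List V) (a b c : V) (h : ({a, b, c} : Set V) ∈ X.faces) :
      EHomotopic X (p ++ a :: b :: c :: q) (p ++ a :: c :: q)
  | doubled (p q : List V) (a : V) (h : ({a} : Set V) ∈ X.faces) :
      EHomotopic X (p ++ a :: a :: q) (p ++ a :: q)

/-- `X` is simply connected: it is connected and every closed edge walk is combinatorially
null-homotopic. -/
def SimplyConnected {V : Type u} (X : SComplex V) : Prop :=
  X.Connected ∧ ∀ (l : List V) (v : V), X.IsWalk l → l.head? = some v →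
    l.getLast? = some v → X.EHomotopic l [v]

/-- `X` is systolic: connected, simply connected and locally 6-large. -/
def IsSystolic {V : Type u} (X : SComplex V) : Prop :=
  X.Connected ∧ X.SimplyConnected ∧ X.LocallySixLarge

end SComplex

/-- A simplicial isomorphism between two abstract simplicial complexes: a bijection between
the vertex sets under which faces correspond exactly to faces. -/
structure SimpIso {V : Type u} {W : Type v} (X : SComplex V) (Y : SComplex W) where
  e : {v : V // X.IsVertex v} ≃ {w : W // Y.IsVertex w}
  face_iff : ∀ σ : Set {v : V // X.IsVertex v},
    (Subtype.val '' σ ∈ X.faces) ↔ (Subtype.val '' (⇑e '' σ) ∈ Y.faces)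


/-! ## The 2-complete Artin complex -/

variable {S : Type u}

/-- The vertices of the 2-complete Artin complex: left cosets `g • A_{S∖T}`
for `T` a connected component of `Γ̂`. -/
def XVertex (M : CoxeterMatrix S) : Type u :=
  {c : Set (ArtinGroup M) // ∃ (g : ArtinGroup M) (T : Set S),
    IsComp M T ∧ c = g • (stdParabolic M Tᶜ : Set (ArtinGroup M))}

/-- The vertex of the 2-complete Artin complex corresponding to the coset `g • A_{S∖T}`. -/
noncomputable def vtx (M : CoxeterMatrix S) (g : ArtinGroup M) (T : Set S) (hT : IsComp M T) : XVertex M :=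
  ⟨g • (stdParabolic M Tᶜ : Set (ArtinGroup M)), g, T, hT, rfl⟩

/-- The 2-complete Artin complex `X̂_Γ`: a finite set of vertices spans a simplex exactly
when the corresponding cosets have nonempty common intersection. -/
noncomputable def XComplex (M : CoxeterMatrix S) : SComplex (XVertex M) where
  faces := {σ | σ.Finite ∧ (⋂ v ∈ σ, (v : XVertex M).1).Nonempty}
  finite_mem := fun _ hs => hs.1
  down_closed := fun s hs t hts =>
    ⟨hs.1.subset hts, hs.2.mono (fun x hx =>
      Set.mem_biInter fun v hv => Set.biInter_subset_of_mem (hts hv) hx)⟩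

noncomputable instance (M : CoxeterMatrix S) : SMul (ArtinGroup M) (XVertex M) where
  smul a v := ⟨a • v.1, by
    obtain ⟨g, T, hT, hc⟩ := v.2
    exact ⟨a * g, T, hT, by rw [hc, mul_smul]⟩⟩

/-- The Artin group acts on the 2-complete Artin complex by left multiplication. -/
noncomputable instance (M : CoxeterMatrix S) : MulAction (ArtinGroup M) (XVertex M) where
  one_smul v := Subtype.ext (one_smul _ v.1)
  mul_smul a b v := Subtype.ext (mul_smul a b v.1)

/-! ## Acylindrical hyperbolicity -/

/-- A geodesic metric space. -/
def IsGeodesicSpace (X : Type*) [MetricSpace X] : Prop :=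
  ∀ x y : X, ∃ f : ℝ → X, f 0 = x ∧ f (dist x y) = y ∧
    ∀ s ∈ Set.Icc (0 : ℝ) (dist x y), ∀ t ∈ Set.Icc (0 : ℝ) (dist x y),
      dist (f s) (f t) = |s - t|

/-- The Gromov product of `x` and `y` at `w`. -/
noncomputable def gromovProd {X : Type*} [MetricSpace X] (x y w : X) : ℝ :=
  (dist x w + dist y w - dist x y) / 2

/-- Gromov hyperbolicity via the four point condition. -/
def IsGromovHyperbolic (X : Type*) [MetricSpace X] : Prop :=
  ∃ δ : ℝ, 0 ≤ δ ∧ ∀ x y z w : X,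
    min (gromovProd x z w) (gromovProd y z w) - δ ≤ gromovProd x y w

/-- An action of `G` on a metric space is acylindrical if for every `ε ≥ 0` there are
`R ≥ 0` and `N` such that for all `x, y` at distance at least `R`, at most `N` elements
`g` satisfy `dist x (g • x) ≤ ε` and `dist y (g • y) ≤ ε`. -/
def AcylindricalAction (G : Type*) (X : Type*) [Group G] [MetricSpace X]
    [MulAction G X] : Prop :=
  ∀ ε : ℝ, 0 ≤ ε → ∃ (R : ℝ) (N : ℕ), 0 ≤ R ∧ ∀ x y : X, R ≤ dist x y →
    ({g : G | dist x (g • x) ≤ ε ∧ dist y (g • y) ≤ ε}).Finite ∧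
    ({g : G | dist x (g • x) ≤ ε ∧ dist y (g • y) ≤ ε}).ncard ≤ N

/-- A virtually cyclic group: one containing a cyclic subgroup of finite index. -/
def VirtuallyCyclic (G : Type*) [Group G] : Prop :=
  ∃ H : Subgroup G, H.FiniteIndex ∧ IsCyclic H

/-- A witness for acylindrical hyperbolicity of `G`: a geodesic Gromov-hyperbolic metric
space with an acylindrical isometric `G`-action with unbounded orbits. -/
structure AcylHypWitness (G : Type u) [Group G] where
  X : Type u
  [metric : MetricSpace X]
  [action : MulAction G X]
  isometric : ∀ g : G, Isometry (fun x : X => g • x)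
  geodesic : IsGeodesicSpace X
  hyperbolic : IsGromovHyperbolic X
  acylindrical : AcylindricalAction G X
  unbounded_orbit : ∃ x : X, ¬ Bornology.IsBounded (MulAction.orbit G x)

/-- `G` is acylindrically hyperbolic: not virtually cyclic, and admitting an acylindrical
isometric action with unbounded orbits on a geodesic Gromov-hyperbolic space. -/
def AcylindricallyHyperbolic (G : Type u) [Group G] : Prop :=
  ¬ VirtuallyCyclic G ∧ Nonempty (AcylHypWitness G)


section Proof
variable {S : Type u}

section CosetFacts
variable {G : Type*} [Group G] (H : Subgroup G)

lemma mem_own_coset (g : G) : g ∈ g • (H : Set G) :=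
  (mem_leftCoset_iff g).2 (by simpa using H.one_mem)

lemma smul_coe_self {h : G} (hh : h ∈ H) : h • (H : Set G) = H := by
  ext y
  rw [mem_leftCoset_iff]
  exact ⟨fun hy => by simpa using H.mul_mem hh hy, fun hy => H.mul_mem (H.inv_mem hh) hy⟩

lemma coset_eq_of_mem {g x : G} (hx : x ∈ g • (H : Set G)) :
    g • (H : Set G) = x • (H : Set G) := by
  rw [mem_leftCoset_iff] at hx
  calc g • (H : Set G) = g • (g⁻¹ * x) • (H : Set G) := by rw [smul_coe_self H hx]
  _ = x • (H : Set G) := by rw [smul_smul, mul_inv_cancel_left]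

lemma diff_mem_of_mem {g x y : G} (hx : x ∈ g • (H : Set G)) (hy : y ∈ g • (H : Set G)) :
    x⁻¹ * y ∈ H := by
  rw [coset_eq_of_mem H hx] at hy
  rwa [mem_leftCoset_iff] at hy
end CosetFacts

variable (M : CoxeterMatrix S)

/-- The parabolic attached to the complement of a component. -/
def Hc (c : (ghat M).ConnectedComponent) : Subgroup (ArtinGroup M) :=
  stdParabolic M (c.supp)ᶜ

/-- The vertex `g • A_{S ∖ supp c}`. -/
noncomputable def cV (g : ArtinGroup M) (c : (ghat M).ConnectedComponent) : XVertex M :=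
  vtx M g c.supp ⟨c, rfl⟩

lemma cV_coe (g : ArtinGroup M) (c : (ghat M).ConnectedComponent) :
    (cV M g c).1 = g • (Hc M c : Set (ArtinGroup M)) := rfl

lemma mem_cV_self (g : ArtinGroup M) (c) : g ∈ (cV M g c).1 :=
  mem_own_coset _ g

lemma mem_cV_mul (g : ArtinGroup M) {h : ArtinGroup M} (c) (hh : h ∈ Hc M c) :
    g * h ∈ (cV M g c).1 := by
  rw [cV_coe, mem_leftCoset_iff]
  simpa using hh

lemma cV_eq_of_mem {g x : ArtinGroup M} {c} (hx : x ∈ (cV M g c).1) :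
    cV M g c = cV M x c :=
  Subtype.ext (coset_eq_of_mem _ hx)

lemma cV_mul {g h : ArtinGroup M} {c} (hh : h ∈ Hc M c) :
    cV M (g * h) c = cV M g c :=
  (cV_eq_of_mem M (mem_cV_mul M g c hh)).symm

lemma vertex_rep (v : XVertex M) : ∃ g c, v = cV M g c := by
  obtain ⟨g, T, ⟨c, rfl⟩, hset⟩ := v.2
  exact ⟨g, c, Subtype.ext hset⟩

lemma mem_faces_of {σ : Set (XVertex M)} (hfin : σ.Finite) (x : ArtinGroup M)
    (hx : ∀ v ∈ σ, x ∈ v.1) : σ ∈ (XComplex M).faces :=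
  ⟨hfin, ⟨x, Set.mem_iInter₂.2 hx⟩⟩

lemma face_pair {a b : XVertex M} {x : ArtinGroup M} (ha : x ∈ a.1) (hb : x ∈ b.1) :
    ({a, b} : Set (XVertex M)) ∈ (XComplex M).faces := by
  refine mem_faces_of M (Set.Finite.insert a (Set.finite_singleton b)) x ?_
  rintro v (rfl | rfl)
  · exact ha
  · exact hb

lemma face_triple {a b c : XVertex M} {x : ArtinGroup M} (ha : x ∈ a.1) (hb : x ∈ b.1)
    (hc : x ∈ c.1) : ({a, b, c} : Set (XVertex M)) ∈ (XComplex M).faces := by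
  refine mem_faces_of M ((Set.finite_singleton c).insert b |>.insert a) x ?_
  rintro v (rfl | rfl | rfl)
  · exact ha
  · exact hb
  · exact hc

lemma face_single {a : XVertex M} {x : ArtinGroup M} (ha : x ∈ a.1) :
    ({a} : Set (XVertex M)) ∈ (XComplex M).faces := by
  refine mem_faces_of M (Set.finite_singleton a) x ?_
  rintro v rfl; exact ha

lemma isVertex (a : XVertex M) : (XComplex M).IsVertex a := by
  obtain ⟨g, c, rfl⟩ := vertex_rep M a
  exact face_single M (mem_cV_self M g c)

lemma adj_of_mem {a b : XVertex M} {x : ArtinGroup M} (ha : x ∈ a.1) (hb : x ∈ b.1) :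
    (XComplex M).Adj a b := face_pair M ha hb

lemma adj_symm : Symmetric (XComplex M).Adj := by
  intro a b h
  unfold SComplex.Adj at *
  rwa [Set.pair_comm]

lemma exists_common_of_adj {a b : XVertex M} (h : (XComplex M).Adj a b) :
    ∃ x, x ∈ a.1 ∧ x ∈ b.1 := by
  obtain ⟨-, x, hx⟩ := h
  simp only [Set.mem_iInter] at hx
  exact ⟨x, hx a (by simp), hx b (by simp)⟩

end Proof
section Letters
variable {S : Type u} (M : CoxeterMatrix S)

/-- A letter: a component together with an element of the associated parabolic. -/
abbrev Letter : Type u := (c : (ghat M).ConnectedComponent) × (Hc M c)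

/-- The product in the Artin group of a list of letters. -/
def prodL (ℓ : List (Letter M)) : ArtinGroup M :=
  (ℓ.map fun p => (p.2 : ArtinGroup M)).prod

@[simp] lemma prodL_nil : prodL M [] = 1 := rfl

@[simp] lemma prodL_cons (p : Letter M) (ℓ : List (Letter M)) :
    prodL M (p :: ℓ) = (p.2 : ArtinGroup M) * prodL M ℓ := by
  simp [prodL]

@[simp] lemma prodL_append (ℓ₁ ℓ₂ : List (Letter M)) :
    prodL M (ℓ₁ ++ ℓ₂) = prodL M ℓ₁ * prodL M ℓ₂ := by
  simp [prodL]

lemma letter_eq {c : (ghat M).ConnectedComponent} {x y : ArtinGroup M}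
    (hx : x ∈ Hc M c) (hy : y ∈ Hc M c) (h : x = y) :
    (⟨c, ⟨x, hx⟩⟩ : Letter M) = ⟨c, ⟨y, hy⟩⟩ := by subst h; rfl

/-- The elementary moves on letter lists. -/
inductive LMove : List (Letter M) → List (Letter M) → Prop
  | refl (ℓ) : LMove ℓ ℓ
  | symm {ℓ₁ ℓ₂} : LMove ℓ₁ ℓ₂ → LMove ℓ₂ ℓ₁
  | trans {ℓ₁ ℓ₂ ℓ₃} : LMove ℓ₁ ℓ₂ → LMove ℓ₂ ℓ₃ → LMove ℓ₁ ℓ₃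
  | idm (p q : List (Letter M)) (c) : LMove (p ++ ⟨c, 1⟩ :: q) (p ++ q)
  | mulm (p q : List (Letter M)) (c) (h h' : Hc M c) :
      LMove (p ++ ⟨c, h⟩ :: ⟨c, h'⟩ :: q) (p ++ ⟨c, h * h'⟩ :: q)
  | amalg (p q : List (Letter M)) (c c') (h : ArtinGroup M) (hc : h ∈ Hc M c)
      (hc' : h ∈ Hc M c') : LMove (p ++ ⟨c, ⟨h, hc⟩⟩ :: q) (p ++ ⟨c', ⟨h, hc'⟩⟩ :: q)

lemma LMove.ctx {ℓ₁ ℓ₂ : List (Letter M)} (h : LMove M ℓ₁ ℓ₂) (p q : List (Letter M)) :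
    LMove M (p ++ ℓ₁ ++ q) (p ++ ℓ₂ ++ q) := by
  induction h with
  | refl ℓ => exact LMove.refl _
  | symm _ ih => exact (ih).symm
  | trans _ _ ih₁ ih₂ => exact ih₁.trans ih₂
  | idm p' q' c =>
      have := LMove.idm (p ++ p') (q' ++ q) c
      simpa [List.append_assoc] using this
  | mulm p' q' c h h' =>
      have := LMove.mulm (p ++ p') (q' ++ q) c h h'
      simpa [List.append_assoc] using this
  | amalg p' q' c c' h hc hc' =>
      have := LMove.amalg (p ++ p') (q' ++ q) c c' h hc hc'
      simpa [List.append_assoc] using this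

lemma LMove.cons {ℓ₁ ℓ₂ : List (Letter M)} (h : LMove M ℓ₁ ℓ₂) (a : Letter M) :
    LMove M (a :: ℓ₁) (a :: ℓ₂) := by
  have := h.ctx M [a] []
  simpa using this

lemma LMove.app_left {ℓ₁ ℓ₂ : List (Letter M)} (h : LMove M ℓ₁ ℓ₂) (p : List (Letter M)) :
    LMove M (p ++ ℓ₁) (p ++ ℓ₂) := by
  have := h.ctx M p []
  simpa using this

lemma LMove.app_right {ℓ₁ ℓ₂ : List (Letter M)} (h : LMove M ℓ₁ ℓ₂) (q : List (Letter M)) :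
    LMove M (ℓ₁ ++ q) (ℓ₂ ++ q) := by
  have := h.ctx M [] q
  simpa using this

lemma LMove.id_single (c) : LMove M [⟨c, 1⟩] [] := by
  have := LMove.idm [] [] c
  simpa using this

lemma LMove.mul_single (c) (h h' : Hc M c) :
    LMove M [⟨c, h⟩, ⟨c, h'⟩] [⟨c, h * h'⟩] := by
  have := LMove.mulm [] [] c h h'
  simpa using this

lemma LMove.amalg_single (c c') (h : ArtinGroup M) (hc : h ∈ Hc M c) (hc' : h ∈ Hc M c') :
    LMove M [⟨c, ⟨h, hc⟩⟩] [⟨c', ⟨h, hc'⟩⟩] := by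
  have := LMove.amalg [] [] c c' h hc hc'
  simpa using this

end Letters
section FreeGroupLetters
variable {S : Type u} [DecidableEq S] (M : CoxeterMatrix S)

/-- The projection from the free group to the Artin group. -/
def toA : FreeGroup S →* ArtinGroup M := PresentedGroup.mk (artinRels M)

lemma toA_of (s : S) : toA M (FreeGroup.of s) = artinGen M s := rfl

lemma toA_eq_one_iff (x : FreeGroup S) :
    toA M x = 1 ↔ x ∈ Subgroup.normalClosure (artinRels M) :=
  QuotientGroup.eq_one_iff x

lemma gen_mem_Hc {s : S} {c : (ghat M).ConnectedComponent}
    (h : (ghat M).connectedComponentMk s ≠ c) : artinGen M s ∈ Hc M c := by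
  refine Subgroup.subset_closure ⟨s, ?_, rfl⟩
  simpa [SimpleGraph.ConnectedComponent.mem_supp_iff] using h

variable (κ : S → (ghat M).ConnectedComponent)
variable (hκ : ∀ s : S, (ghat M).connectedComponentMk s ≠ κ s)

/-- The letter associated to a single free-group letter. -/
def letterOf (p : S × Bool) : Letter M :=
  if p.2 then ⟨κ p.1, ⟨artinGen M p.1, gen_mem_Hc M (hκ p.1)⟩⟩
  else ⟨κ p.1, ⟨(artinGen M p.1)⁻¹, (Hc M (κ p.1)).inv_mem (gen_mem_Hc M (hκ p.1))⟩⟩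

/-- The letter list of a free group element. -/
def letters (x : FreeGroup S) : List (Letter M) := x.toWord.map (letterOf M κ hκ)

lemma letters_one : letters M κ hκ 1 = [] := by simp [letters]

lemma letters_of (s : S) :
    letters M κ hκ (FreeGroup.of s) = [letterOf M κ hκ (s, true)] := by
  simp [letters, FreeGroup.toWord_of]

lemma lmove_cancel (s : S) (b : Bool) :
    LMove M [letterOf M κ hκ (s, b), letterOf M κ hκ (s, !b)] [] := by
  have h1 : LMove M [letterOf M κ hκ (s, b), letterOf M κ hκ (s, !b)]
      [⟨κ s, ⟨artinGen M s, gen_mem_Hc M (hκ s)⟩ *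
        ⟨(artinGen M s)⁻¹, (Hc M (κ s)).inv_mem (gen_mem_Hc M (hκ s))⟩⟩] := by
    cases b
    · have := LMove.mul_single M (κ s)
        ⟨(artinGen M s)⁻¹, (Hc M (κ s)).inv_mem (gen_mem_Hc M (hκ s))⟩
        ⟨artinGen M s, gen_mem_Hc M (hκ s)⟩
      refine LMove.trans ?_ (LMove.refl _)
      simp only [letterOf]
      refine LMove.trans this ?_
      refine LMove.trans (LMove.refl _) ?_
      have he : (⟨(artinGen M s)⁻¹, (Hc M (κ s)).inv_mem (gen_mem_Hc M (hκ s))⟩ *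
          ⟨artinGen M s, gen_mem_Hc M (hκ s)⟩ : Hc M (κ s)) =
          (⟨artinGen M s, gen_mem_Hc M (hκ s)⟩ *
          ⟨(artinGen M s)⁻¹, (Hc M (κ s)).inv_mem (gen_mem_Hc M (hκ s))⟩ : Hc M (κ s)) := by
        ext; simp
      rw [he]
      exact LMove.refl _
    · have := LMove.mul_single M (κ s)
        ⟨artinGen M s, gen_mem_Hc M (hκ s)⟩
        ⟨(artinGen M s)⁻¹, (Hc M (κ s)).inv_mem (gen_mem_Hc M (hκ s))⟩
      simpa [letterOf] using this
  refine h1.trans ?_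
  have he : (⟨artinGen M s, gen_mem_Hc M (hκ s)⟩ *
      ⟨(artinGen M s)⁻¹, (Hc M (κ s)).inv_mem (gen_mem_Hc M (hκ s))⟩ : Hc M (κ s)) = 1 := by
    ext; simp
  rw [he]
  exact LMove.id_single M (κ s)

lemma lmove_of_red {L₁ L₂ : List (S × Bool)} (h : FreeGroup.Red L₁ L₂) :
    LMove M (L₁.map (letterOf M κ hκ)) (L₂.map (letterOf M κ hκ)) := by
  induction h with
  | refl => exact LMove.refl _
  | tail _ h2 ih =>
      refine ih.trans ?_
      cases h2 with
      | @not L₃ L₄ x b =>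
          have := (lmove_cancel M κ hκ x b).ctx M (L₃.map (letterOf M κ hκ))
            (L₄.map (letterOf M κ hκ))
          simpa using this

lemma toWord_mul' (x y : FreeGroup S) :
    (x * y).toWord = FreeGroup.reduce (x.toWord ++ y.toWord) := by
  rw [← FreeGroup.reduce_toWord (x * y)]
  refine (FreeGroup.reduce.sound ?_).symm
  rw [← FreeGroup.mul_mk, FreeGroup.mk_toWord, FreeGroup.mk_toWord]
  exact FreeGroup.mk_toWord.symm

lemma letters_mul (x y : FreeGroup S) :
    LMove M (letters M κ hκ (x * y)) (letters M κ hκ x ++ letters M κ hκ y) := by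
  have hred : FreeGroup.Red (x.toWord ++ y.toWord) ((x * y).toWord) := by
    rw [toWord_mul']
    exact FreeGroup.reduce.red
  have := (lmove_of_red M κ hκ hred).symm
  simpa [letters] using this

lemma letters_inv_cancel (x : FreeGroup S) :
    LMove M (letters M κ hκ x ++ letters M κ hκ x⁻¹) [] := by
  have := (letters_mul M κ hκ x x⁻¹).symm
  refine this.trans ?_
  rw [mul_inv_cancel]
  rw [letters_one]
  exact LMove.refl _

end FreeGroupLetters
section Algebraic
variable {S : Type u} [DecidableEq S] (M : CoxeterMatrix S)
variable (κ : S → (ghat M).ConnectedComponent)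
variable (hκ : ∀ s : S, (ghat M).connectedComponentMk s ≠ κ s)

lemma single_to_letters (c : (ghat M).ConnectedComponent) (h : ArtinGroup M)
    (hm : h ∈ Hc M c) :
    ∃ x : FreeGroup S, toA M x = h ∧ LMove M [⟨c, ⟨h, hm⟩⟩] (letters M κ hκ x) := by
  have key : ∀ (g : ArtinGroup M), g ∈ Subgroup.closure (artinGen M '' (c.supp)ᶜ) →
      ∃ x : FreeGroup S, toA M x = g ∧ ∀ hg : g ∈ Hc M c,
        LMove M [⟨c, ⟨g, hg⟩⟩] (letters M κ hκ x) := by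
    intro g₀ hm'
    induction hm' using Subgroup.closure_induction with
    | mem g hg =>
        obtain ⟨s, hs, rfl⟩ := hg
        refine ⟨FreeGroup.of s, rfl, fun hgm => ?_⟩
        rw [letters_of]
        have hsc : (ghat M).connectedComponentMk s ≠ c := by
          simpa [SimpleGraph.ConnectedComponent.mem_supp_iff] using hs
        show LMove M [⟨c, ⟨artinGen M s, _⟩⟩] [letterOf M κ hκ (s, true)]
        unfold letterOf
        simp only [if_pos]
        exact LMove.amalg_single M c (κ s) (artinGen M s) (gen_mem_Hc M hsc)
          (gen_mem_Hc M (hκ s))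
    | one =>
        refine ⟨1, map_one _, fun hgm => ?_⟩
        rw [letters_one]
        have he : (⟨(1 : ArtinGroup M), hgm⟩ : Hc M c) = 1 := rfl
        rw [he]
        exact LMove.id_single M c
    | mul g g' hg hg' ihg ihg' =>
        obtain ⟨x₁, hx₁, hm₁⟩ := ihg
        obtain ⟨x₂, hx₂, hm₂⟩ := ihg'
        have hgc : g ∈ Hc M c := hg
        have hgc' : g' ∈ Hc M c := hg'
        refine ⟨x₁ * x₂, by rw [map_mul, hx₁, hx₂], fun hgm => ?_⟩
        have step1 : LMove M [⟨c, ⟨g * g', hgm⟩⟩]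
            [⟨c, ⟨g, hgc⟩⟩, ⟨c, ⟨g', hgc'⟩⟩] := by
          have := (LMove.mul_single M c ⟨g, hgc⟩ ⟨g', hgc'⟩).symm
          exact this
        refine step1.trans ?_
        have step2 : LMove M [⟨c, ⟨g, hgc⟩⟩, ⟨c, ⟨g', hgc'⟩⟩]
            (letters M κ hκ x₁ ++ letters M κ hκ x₂) := by
          have h1 := (hm₁ hgc).app_right M [⟨c, ⟨g', hgc'⟩⟩]
          have h2 := ((hm₂ hgc').app_left M (letters M κ hκ x₁))
          exact (LMove.trans (by simpa using h1) h2)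
        exact step2.trans (letters_mul M κ hκ x₁ x₂).symm
    | inv g hg ihg =>
        obtain ⟨x₁, hx₁, hm₁⟩ := ihg
        have hgc : g ∈ Hc M c := hg
        refine ⟨x₁⁻¹, by rw [map_inv, hx₁], fun hgm => ?_⟩
        set A : Letter M := ⟨c, ⟨g⁻¹, hgm⟩⟩ with hA
        have step1 : LMove M [A] (A :: (letters M κ hκ x₁ ++ letters M κ hκ x₁⁻¹)) := by
          have := ((letters_inv_cancel M κ hκ x₁).symm).cons M A
          simpa using this
        refine step1.trans ?_
        have step2 : LMove M (A :: (letters M κ hκ x₁ ++ letters M κ hκ x₁⁻¹))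
            (A :: ⟨c, ⟨g, hgc⟩⟩ :: letters M κ hκ x₁⁻¹) := by
          have := ((hm₁ hgc).symm.ctx M [A] (letters M κ hκ x₁⁻¹))
          simpa using this
        refine step2.trans ?_
        have step3 : LMove M (A :: ⟨c, ⟨g, hgc⟩⟩ :: letters M κ hκ x₁⁻¹)
            (⟨c, 1⟩ :: letters M κ hκ x₁⁻¹) := by
          have := LMove.mulm (M := M) [] (letters M κ hκ x₁⁻¹) c
            ⟨g⁻¹, hgm⟩ ⟨g, hgc⟩
          have he : (⟨g⁻¹, hgm⟩ * ⟨g, hgc⟩ : Hc M c) = 1 := by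
            ext; simp
          rw [he] at this
          simpa using this
        refine step3.trans ?_
        have := LMove.idm (M := M) [] (letters M κ hκ x₁⁻¹) c
        simpa using this
  obtain ⟨x, hx, hl⟩ := key h hm
  exact ⟨x, hx, hl hm⟩

lemma list_to_letters (ℓ : List (Letter M)) :
    ∃ x : FreeGroup S, toA M x = prodL M ℓ ∧ LMove M ℓ (letters M κ hκ x) := by
  induction ℓ with
  | nil =>
      refine ⟨1, by simp, ?_⟩
      rw [letters_one]
      exact LMove.refl _
  | cons p ℓ ih =>
      obtain ⟨c, h⟩ := p
      obtain ⟨x₂, hx₂, hm₂⟩ := ih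
      obtain ⟨x₁, hx₁, hm₁⟩ := single_to_letters M κ hκ c h.1 h.2
      refine ⟨x₁ * x₂, by rw [map_mul, hx₁, hx₂]; simp, ?_⟩
      have step1 : LMove M (⟨c, h⟩ :: ℓ) (⟨c, h⟩ :: letters M κ hκ x₂) := hm₂.cons M _
      refine step1.trans ?_
      have step2 : LMove M (⟨c, h⟩ :: letters M κ hκ x₂)
          (letters M κ hκ x₁ ++ letters M κ hκ x₂) := by
        have := hm₁.app_right M (letters M κ hκ x₂)
        simpa using this
      exact step2.trans (letters_mul M κ hκ x₁ x₂).symm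

lemma braid_mem_closure (k : ℕ) (s t : S) :
    braidWord k s t ∈ Subgroup.closure ({FreeGroup.of s, FreeGroup.of t} : Set (FreeGroup S)) := by
  refine Subgroup.list_prod_mem _ ?_
  intro x hx
  simp only [List.mem_map] at hx
  obtain ⟨i, -, rfl⟩ := hx
  by_cases h : i % 2 = 0
  · simp only [if_pos h]
    exact Subgroup.subset_closure (by simp)
  · simp only [if_neg h]
    exact Subgroup.subset_closure (by simp)

lemma single_comp_letters {s t : S} {i : (ghat M).ConnectedComponent}
    (hs : (ghat M).connectedComponentMk s ≠ i) (ht : (ghat M).connectedComponentMk t ≠ i)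
    {x : FreeGroup S}
    (hx : x ∈ Subgroup.closure ({FreeGroup.of s, FreeGroup.of t} : Set (FreeGroup S))) :
    ∃ hm : toA M x ∈ Hc M i, LMove M (letters M κ hκ x) [⟨i, ⟨toA M x, hm⟩⟩] := by
  induction hx using Subgroup.closure_induction with
  | mem y hy =>
      rcases hy with rfl | rfl
      · refine ⟨gen_mem_Hc M hs, ?_⟩
        rw [letters_of]
        show LMove M [letterOf M κ hκ (s, true)] _
        unfold letterOf
        simp only [if_pos]
        exact LMove.amalg_single M (κ s) i (artinGen M s) (gen_mem_Hc M (hκ s))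
          (gen_mem_Hc M hs)
      · refine ⟨gen_mem_Hc M ht, ?_⟩
        rw [letters_of]
        show LMove M [letterOf M κ hκ (t, true)] _
        unfold letterOf
        simp only [if_pos]
        exact LMove.amalg_single M (κ t) i (artinGen M t) (gen_mem_Hc M (hκ t))
          (gen_mem_Hc M ht)
  | one =>
      refine ⟨by simp [Subgroup.one_mem], ?_⟩
      rw [letters_one]
      have h1 : (⟨toA M 1, by simp [Subgroup.one_mem]⟩ : Hc M i) = 1 := by ext; simp
      rw [h1]
      exact (LMove.id_single M i).symm
  | mul y y' hy hy' ihy ihy' =>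
      obtain ⟨hmy, hly⟩ := ihy
      obtain ⟨hmy', hly'⟩ := ihy'
      refine ⟨by rw [map_mul]; exact Subgroup.mul_mem _ hmy hmy', ?_⟩
      have step1 := letters_mul M κ hκ y y'
      refine step1.trans ?_
      have step2 : LMove M (letters M κ hκ y ++ letters M κ hκ y')
          ([⟨i, ⟨toA M y, hmy⟩⟩] ++ [⟨i, ⟨toA M y', hmy'⟩⟩]) := by
        refine (hly.app_right M _).trans ?_
        exact hly'.app_left M _
      refine step2.trans ?_
      have := LMove.mul_single M i ⟨toA M y, hmy⟩ ⟨toA M y', hmy'⟩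
      have he : (⟨toA M y, hmy⟩ * ⟨toA M y', hmy'⟩ : Hc M i)
          = ⟨toA M (y * y'), by rw [map_mul]; exact Subgroup.mul_mem _ hmy hmy'⟩ := by
        ext; simp [map_mul]
      rw [he] at this
      simpa using this
  | inv y hy ihy =>
      obtain ⟨hmy, hly⟩ := ihy
      have hminv : toA M y⁻¹ ∈ Hc M i := by rw [map_inv]; exact Subgroup.inv_mem _ hmy
      refine ⟨hminv, ?_⟩
      refine LMove.symm ?_
      set A : Letter M := ⟨i, ⟨toA M y⁻¹, hminv⟩⟩ with hA
      have step1 : LMove M [A] (A :: (letters M κ hκ y ++ letters M κ hκ y⁻¹)) := by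
        have := ((letters_inv_cancel M κ hκ y).symm).cons M A
        simpa using this
      refine step1.trans ?_
      have step2 : LMove M (A :: (letters M κ hκ y ++ letters M κ hκ y⁻¹))
          (A :: ⟨i, ⟨toA M y, hmy⟩⟩ :: letters M κ hκ y⁻¹) := by
        have := (hly.ctx M [A] (letters M κ hκ y⁻¹))
        simpa using this
      refine step2.trans ?_
      have step3 : LMove M (A :: ⟨i, ⟨toA M y, hmy⟩⟩ :: letters M κ hκ y⁻¹)
          (⟨i, 1⟩ :: letters M κ hκ y⁻¹) := by
        have := LMove.mulm (M := M) [] (letters M κ hκ y⁻¹) i ⟨toA M y⁻¹, hminv⟩ ⟨toA M y, hmy⟩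
        have he : (⟨toA M y⁻¹, hminv⟩ * ⟨toA M y, hmy⟩ : Hc M i) = 1 := by
          ext; simp [map_inv]
        rw [he] at this
        simpa [hA] using this
      refine step3.trans ?_
      have := LMove.idm (M := M) [] (letters M κ hκ y⁻¹) i
      simpa using this



lemma rel_null (hpick : ∀ a b : (ghat M).ConnectedComponent, ∃ i, i ≠ a ∧ i ≠ b)
    {r : FreeGroup S} (hr : r ∈ artinRels M) :
    LMove M (letters M κ hκ r) [] := by
  obtain ⟨s, t, hst, hm0, rfl⟩ := hr
  obtain ⟨i, his, hit⟩ := hpick ((ghat M).connectedComponentMk s)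
    ((ghat M).connectedComponentMk t)
  have hcl : braidWord (M s t) s t * (braidWord (M s t) t s)⁻¹ ∈
      Subgroup.closure ({FreeGroup.of s, FreeGroup.of t} : Set (FreeGroup S)) := by
    refine Subgroup.mul_mem _ (braid_mem_closure (M s t) s t) (Subgroup.inv_mem _ ?_)
    have := braid_mem_closure (S := S) (M s t) t s
    have hsub : ({FreeGroup.of t, FreeGroup.of s} : Set (FreeGroup S)) ⊆
        ({FreeGroup.of s, FreeGroup.of t} : Set (FreeGroup S)) := by
      intro x hx; rcases hx with rfl | rfl <;> simp
    exact Subgroup.closure_mono hsub this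
  obtain ⟨hm, hl⟩ := single_comp_letters M κ hκ his.symm hit.symm hcl
  refine hl.trans ?_
  have h1 : toA M (braidWord (M s t) s t * (braidWord (M s t) t s)⁻¹) = 1 := by
    rw [toA_eq_one_iff]
    exact Subgroup.subset_normalClosure ⟨s, t, hst, hm0, rfl⟩
  have he : (⟨toA M (braidWord (M s t) s t * (braidWord (M s t) t s)⁻¹), hm⟩ : Hc M i) = 1 := by
    ext; simpa using h1
  rw [he]
  exact LMove.id_single M i

lemma nclosure_null (hpick : ∀ a b : (ghat M).ConnectedComponent, ∃ i, i ≠ a ∧ i ≠ b)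
    {x : FreeGroup S} (hx : x ∈ Subgroup.normalClosure (artinRels M)) :
    LMove M (letters M κ hκ x) [] := by
  have hx' : x ∈ Subgroup.closure (Group.conjugatesOfSet (artinRels M)) := hx
  clear hx
  induction hx' using Subgroup.closure_induction with
  | mem y hy =>
      rw [Group.mem_conjugatesOfSet_iff] at hy
      obtain ⟨r, hr, hconj⟩ := hy
      obtain ⟨u, rfl⟩ := isConj_iff.1 hconj
      have s1 := letters_mul M κ hκ (u * r) u⁻¹
      have s2 := (letters_mul M κ hκ u r).app_right M (letters M κ hκ u⁻¹)
      have s3 := ((rel_null M κ hκ hpick hr).ctx M (letters M κ hκ u) (letters M κ hκ u⁻¹))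
      refine (s1.trans (s2.trans ?_)).trans (letters_inv_cancel M κ hκ u)
      simpa using s3
  | one => rw [letters_one]; exact LMove.refl _
  | mul y y' hy hy' ihy ihy' =>
      refine (letters_mul M κ hκ y y').trans ?_
      have := (ihy.app_right M (letters M κ hκ y')).trans ihy'
      simpa using this
  | inv y hy ihy =>
      have s1 : LMove M (letters M κ hκ y⁻¹) (letters M κ hκ y ++ letters M κ hκ y⁻¹) := by
        have := ihy.symm.app_right M (letters M κ hκ y⁻¹)
        simpa using this
      exact s1.trans (letters_inv_cancel M κ hκ y)

lemma lmove_nil_of_prod_one (hpick : ∀ a b : (ghat M).ConnectedComponent, ∃ i, i ≠ a ∧ i ≠ b)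
    {ℓ : List (Letter M)} (h : prodL M ℓ = 1) : LMove M ℓ [] := by
  have hκ : ∀ s : S, (ghat M).connectedComponentMk s ≠
      (fun s => (hpick ((ghat M).connectedComponentMk s)
        ((ghat M).connectedComponentMk s)).choose) s :=
    fun s => Ne.symm (hpick ((ghat M).connectedComponentMk s)
      ((ghat M).connectedComponentMk s)).choose_spec.1
  obtain ⟨x, hx, hm⟩ := list_to_letters M _ hκ ℓ
  refine hm.trans ?_
  exact nclosure_null M _ hκ hpick ((toA_eq_one_iff M x).1 (hx.trans h))

end Algebraic
section Walks
variable {V : Type*} (X : SComplex V)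

lemma eh_of_eq {l l' : List V} (h : l = l') : X.EHomotopic l l' := by
  subst h; exact SComplex.EHomotopic.refl l

lemma eh_ctx {l l' : List V} (h : X.EHomotopic l l') (p q : List V) :
    X.EHomotopic (p ++ l ++ q) (p ++ l' ++ q) := by
  induction h with
  | refl l => exact SComplex.EHomotopic.refl _
  | symm _ ih => exact ih.symm
  | trans _ _ ih1 ih2 => exact ih1.trans ih2
  | triangle p' q' a b c hf =>
      have := SComplex.EHomotopic.triangle (X := X) (p ++ p') (q' ++ q) a b c hf
      simpa [List.append_assoc] using this
  | doubled p' q' a hf =>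
      have := SComplex.EHomotopic.doubled (X := X) (p ++ p') (q' ++ q) a hf
      simpa [List.append_assoc] using this

variable {S : Type u} (M : CoxeterMatrix S)

/-- The standard walk associated to a letter list. -/
noncomputable def wk (c₀ : (ghat M).ConnectedComponent) (g : ArtinGroup M) :
    List (Letter M) → List (XVertex M)
  | [] => [cV M g c₀]
  | ⟨c, h⟩ :: ℓ => cV M g c₀ :: cV M g c :: wk c₀ (g * h) ℓ

variable (c₀ : (ghat M).ConnectedComponent)

@[simp] lemma wk_nil (g : ArtinGroup M) : wk M c₀ g [] = [cV M g c₀] := rfl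

lemma wk_cons (g : ArtinGroup M) (c) (h : Hc M c) (ℓ : List (Letter M)) :
    wk M c₀ g (⟨c, h⟩ :: ℓ) = cV M g c₀ :: cV M g c :: wk M c₀ (g * h) ℓ := rfl

lemma wk_head : ∀ (ℓ : List (Letter M)) (g : ArtinGroup M),
    ∃ t, wk M c₀ g ℓ = cV M g c₀ :: t := by
  intro ℓ g
  cases ℓ with
  | nil => exact ⟨[], rfl⟩
  | cons p ℓ => obtain ⟨c, h⟩ := p; exact ⟨_, rfl⟩

lemma wk_append : ∀ (ℓ₁ : List (Letter M)) (g : ArtinGroup M) (ℓ₂ : List (Letter M)),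
    wk M c₀ g (ℓ₁ ++ ℓ₂) = (wk M c₀ g ℓ₁).dropLast ++ wk M c₀ (g * prodL M ℓ₁) ℓ₂ := by
  intro ℓ₁
  induction ℓ₁ with
  | nil => intro g ℓ₂; simp
  | cons p ℓ₁ ih =>
      intro g ℓ₂
      obtain ⟨c, h⟩ := p
      obtain ⟨t, ht⟩ := wk_head M c₀ ℓ₁ (g * h)
      rw [List.cons_append, wk_cons, wk_cons, ih (g * h) ℓ₂, ht]
      simp [mul_assoc]

lemma wk_last : ∀ (ℓ : List (Letter M)) (g : ArtinGroup M),
    wk M c₀ g ℓ = (wk M c₀ g ℓ).dropLast ++ [cV M (g * prodL M ℓ) c₀] := by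
  intro ℓ
  induction ℓ with
  | nil => intro g; simp
  | cons p ℓ ih =>
      intro g
      obtain ⟨c, h⟩ := p
      obtain ⟨t, ht⟩ := wk_head M c₀ ℓ (g * h)
      rw [wk_cons]
      conv_lhs => rw [ih (g * h)]
      rw [ht]
      simp [mul_assoc]

lemma move_hom {ℓ ℓ' : List (Letter M)} (hm : LMove M ℓ ℓ') :
    ∀ g : ArtinGroup M, (XComplex M).EHomotopic (wk M c₀ g ℓ) (wk M c₀ g ℓ') := by
  induction hm with
  | refl ℓ => exact fun g => SComplex.EHomotopic.refl _
  | symm _ ih => exact fun g => (ih g).symm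
  | trans _ _ ih1 ih2 => exact fun g => (ih1 g).trans (ih2 g)
  | idm p q c =>
      intro g
      rw [wk_append, wk_append]
      set g' := g * prodL M p with hg'
      obtain ⟨t, ht⟩ := wk_head M c₀ q g'
      have e1 : wk M c₀ g' (⟨c, 1⟩ :: q) = cV M g' c₀ :: cV M g' c :: cV M g' c₀ :: t := by
        rw [wk_cons]
        simp only [OneMemClass.coe_one, mul_one]
        rw [ht]
      rw [e1, ht]
      have h1 : (XComplex M).EHomotopic (cV M g' c₀ :: cV M g' c :: cV M g' c₀ :: t)
          (cV M g' c₀ :: cV M g' c₀ :: t) :=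
        SComplex.EHomotopic.triangle [] t _ _ _
          (face_triple M (mem_cV_self M g' c₀) (mem_cV_self M g' c) (mem_cV_self M g' c₀))
      have h2 : (XComplex M).EHomotopic (cV M g' c₀ :: cV M g' c₀ :: t)
          (cV M g' c₀ :: t) :=
        SComplex.EHomotopic.doubled [] t _ (face_single M (mem_cV_self M g' c₀))
      have := (h1.trans h2).symm
      have := eh_ctx (XComplex M) (h1.trans h2) ((wk M c₀ g p).dropLast) []
      simpa using this
  | mulm p q c h h' =>
      intro g
      rw [wk_append, wk_append]
      set g' := g * prodL M p with hg'
      have e1 : wk M c₀ g' (⟨c, h⟩ :: ⟨c, h'⟩ :: q)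
          = cV M g' c₀ :: cV M g' c :: cV M (g' * h) c₀ :: cV M g' c ::
            wk M c₀ (g' * h * h') q := by
        rw [wk_cons, wk_cons, cV_mul M h.2]
      have e2 : wk M c₀ g' (⟨c, h * h'⟩ :: q)
          = cV M g' c₀ :: cV M g' c :: wk M c₀ (g' * h * h') q := by
        rw [wk_cons]
        simp only [Subgroup.coe_mul, ← mul_assoc]
      rw [e1, e2]
      have h1 : (XComplex M).EHomotopic
          (cV M g' c₀ :: cV M g' c :: cV M (g' * h) c₀ :: cV M g' c ::
            wk M c₀ (g' * h * h') q)
          (cV M g' c₀ :: cV M g' c :: cV M g' c :: wk M c₀ (g' * h * h') q) :=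
        SComplex.EHomotopic.triangle [cV M g' c₀] (wk M c₀ (g' * h * h') q) _ _ _
          (face_triple M (mem_cV_mul M g' c h.2) (mem_cV_self M (g' * h) c₀)
            (mem_cV_mul M g' c h.2))
      have h2 : (XComplex M).EHomotopic
          (cV M g' c₀ :: cV M g' c :: cV M g' c :: wk M c₀ (g' * h * h') q)
          (cV M g' c₀ :: cV M g' c :: wk M c₀ (g' * h * h') q) :=
        SComplex.EHomotopic.doubled [cV M g' c₀] (wk M c₀ (g' * h * h') q) _
          (face_single M (mem_cV_self M g' c))
      have := (h1.trans h2)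
      have := eh_ctx (XComplex M) (h1.trans h2) ((wk M c₀ g p).dropLast) []
      simpa using this
  | amalg p q c c' h hc hc' =>
      intro g
      rw [wk_append, wk_append]
      set g' := g * prodL M p with hg'
      obtain ⟨t, ht⟩ := wk_head M c₀ q (g' * h)
      have e1 : wk M c₀ g' (⟨c, ⟨h, hc⟩⟩ :: q)
          = cV M g' c₀ :: cV M g' c :: cV M (g' * h) c₀ :: t := by rw [wk_cons, ht]
      have e2 : wk M c₀ g' (⟨c', ⟨h, hc'⟩⟩ :: q)
          = cV M g' c₀ :: cV M g' c' :: cV M (g' * h) c₀ :: t := by rw [wk_cons, ht]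
      rw [e1, e2]
      have h1 : (XComplex M).EHomotopic
          (cV M g' c₀ :: cV M g' c :: cV M g' c' :: cV M (g' * h) c₀ :: t)
          (cV M g' c₀ :: cV M g' c :: cV M (g' * h) c₀ :: t) :=
        SComplex.EHomotopic.triangle [cV M g' c₀] t _ _ _
          (face_triple M (mem_cV_mul M g' c hc) (mem_cV_mul M g' c' hc')
            (mem_cV_self M (g' * h) c₀))
      have h2 : (XComplex M).EHomotopic
          (cV M g' c₀ :: cV M g' c :: cV M g' c' :: cV M (g' * h) c₀ :: t)
          (cV M g' c₀ :: cV M g' c' :: cV M (g' * h) c₀ :: t) :=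
        SComplex.EHomotopic.triangle [] (cV M (g' * h) c₀ :: t) _ _ _
          (face_triple M (mem_cV_self M g' c₀) (mem_cV_self M g' c)
            (mem_cV_self M g' c'))
      have := (h1.symm.trans h2)
      have := eh_ctx (XComplex M) (h1.symm.trans h2) ((wk M c₀ g p).dropLast) []
      simpa using this

lemma wk_null [DecidableEq S]
    (hpick : ∀ a b : (ghat M).ConnectedComponent, ∃ i, i ≠ a ∧ i ≠ b)
    {ℓ : List (Letter M)} (h : prodL M ℓ = 1) (g : ArtinGroup M) :
    (XComplex M).EHomotopic (wk M c₀ g ℓ) [cV M g c₀] := by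
  have := move_hom M c₀ (lmove_nil_of_prod_one M hpick h) g
  simpa using this

end Walks
section Ext
variable {S : Type u} (M : CoxeterMatrix S) (c₀ : (ghat M).ConnectedComponent)

lemma ext_walk : ∀ (l : List (XVertex M)) (u : XVertex M) (x : ArtinGroup M),
    (u :: l).Chain' (XComplex M).Adj → x ∈ u.1 →
    ∃ ℓ : List (Letter M), (x * prodL M ℓ) ∈ ((u :: l).getLast (by simp)).1 ∧
      (XComplex M).EHomotopic
        (cV M x c₀ :: (u :: l) ++ [cV M (x * prodL M ℓ) c₀]) (wk M c₀ x ℓ) := by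
  intro l
  induction l with
  | nil =>
      intro u x _ hx
      obtain ⟨g, c, rfl⟩ := vertex_rep M u
      have hu : cV M g c = cV M x c := cV_eq_of_mem M hx
      refine ⟨[⟨c, 1⟩], ?_, ?_⟩
      · simpa [prodL] using hx
      · refine eh_of_eq _ ?_
        rw [hu, wk_cons, wk_nil]
        simp [prodL]
  | cons u' l' ih =>
      intro u x hchain hx
      replace hchain := List.isChain_cons_cons.1 hchain
      obtain ⟨hadj, hchain'⟩ := hchain
      obtain ⟨x', hx'u, hx'u'⟩ := exists_common_of_adj M hadj
      obtain ⟨g, c, hurep⟩ := vertex_rep M u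
      have hu : u = cV M x c := by
        rw [hurep]; exact cV_eq_of_mem M (hurep ▸ hx)
      have hx'mem : x' ∈ (cV M x c).1 := hu ▸ hx'u
      have hd : x⁻¹ * x' ∈ Hc M c :=
        diff_mem_of_mem (Hc M c) (mem_cV_self M x c) hx'mem
      obtain ⟨ℓ', hlast', hEH'⟩ := ih u' x' hchain' hx'u'
      refine ⟨⟨c, ⟨x⁻¹ * x', hd⟩⟩ :: ℓ', ?_, ?_⟩
      · have hkey : x * prodL M (⟨c, ⟨x⁻¹ * x', hd⟩⟩ :: ℓ') = x' * prodL M ℓ' := by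
          rw [prodL_cons]
          simp [← mul_assoc]
        rw [hkey]
        have : ((u :: u' :: l').getLast (by simp)) = ((u' :: l').getLast (by simp)) := by
          exact List.getLast_cons (by simp)
        rw [this]
        exact hlast'
      · have hkey : x * prodL M (⟨c, ⟨x⁻¹ * x', hd⟩⟩ :: ℓ') = x' * prodL M ℓ' := by
          rw [prodL_cons]; simp [← mul_assoc]
        have hwk : wk M c₀ x (⟨c, ⟨x⁻¹ * x', hd⟩⟩ :: ℓ')
            = cV M x c₀ :: u :: wk M c₀ x' ℓ' := by
          rw [wk_cons, ← hu]
          congr 2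
          simp
        rw [hwk, hkey]
        have step1 : (XComplex M).EHomotopic
            (cV M x c₀ :: u :: u' :: (l' ++ [cV M (x' * prodL M ℓ') c₀]))
            (cV M x c₀ :: u :: cV M x' c₀ :: u' :: (l' ++ [cV M (x' * prodL M ℓ') c₀])) := by
          refine SComplex.EHomotopic.symm ?_
          exact SComplex.EHomotopic.triangle [cV M x c₀] (l' ++ [cV M (x' * prodL M ℓ') c₀])
            u (cV M x' c₀) u' (face_triple M hx'u (mem_cV_self M x' c₀) hx'u')
        have step2 : (XComplex M).EHomotopic
            (cV M x c₀ :: u :: cV M x' c₀ :: u' :: (l' ++ [cV M (x' * prodL M ℓ') c₀]))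
            (cV M x c₀ :: u :: wk M c₀ x' ℓ') := by
          have := eh_ctx (XComplex M) hEH' [cV M x c₀, u] []
          simpa using this
        have := step1.trans step2
        simpa using this

lemma reach_base [DecidableEq S]
    (hpick : ∀ a b : (ghat M).ConnectedComponent, ∃ i, i ≠ a ∧ i ≠ b) :
    ∀ (x : FreeGroup S) (g₀ : ArtinGroup M),
      Relation.ReflTransGen (XComplex M).Adj (cV M g₀ c₀) (cV M (g₀ * toA M x) c₀) := by
  intro x
  induction x using FreeGroup.induction_on with
  | C1 => intro g₀; simpa using Relation.ReflTransGen.refl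
  | of s =>
      intro g₀
      obtain ⟨i, his, -⟩ := hpick ((ghat M).connectedComponentMk s)
        ((ghat M).connectedComponentMk s)
      have hmem : artinGen M s ∈ Hc M i := gen_mem_Hc M his.symm
      have adj1 : (XComplex M).Adj (cV M g₀ c₀) (cV M g₀ i) :=
        adj_of_mem M (mem_cV_self M g₀ c₀) (mem_cV_self M g₀ i)
      have adj2 : (XComplex M).Adj (cV M g₀ i) (cV M (g₀ * artinGen M s) c₀) :=
        adj_of_mem M (mem_cV_mul M g₀ i hmem) (mem_cV_self M _ c₀)
      have : toA M (FreeGroup.of s : FreeGroup S) = artinGen M s := rfl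
      rw [this]
      exact (Relation.ReflTransGen.single adj2).head adj1
  | inv_of s ih =>
      intro g₀
      have hsym : Symmetric (Relation.ReflTransGen (XComplex M).Adj) :=
        by
          haveI : Std.Symm (XComplex M).Adj := ⟨fun a b h => adj_symm M h⟩
          exact fun a b h => Std.Symm.symm a b h
      have := ih (g₀ * toA M (FreeGroup.of s : FreeGroup S)⁻¹)
      rw [map_inv] at *
      have h2 := ih (g₀ * (toA M (FreeGroup.of s : FreeGroup S))⁻¹)
      rw [inv_mul_cancel_right] at h2
      exact hsym h2
  | mul y z ihy ihz =>
      intro g₀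
      have h1 := ihy g₀
      have h2 := ihz (g₀ * toA M y)
      rw [map_mul, ← mul_assoc]
      exact h1.trans h2

lemma xcomplex_connected [DecidableEq S]
    (hpick : ∀ a b : (ghat M).ConnectedComponent, ∃ i, i ≠ a ∧ i ≠ b) :
    (XComplex M).Connected := by
  intro u v _ _
  obtain ⟨g, c, rfl⟩ := vertex_rep M u
  obtain ⟨g', c', rfl⟩ := vertex_rep M v
  have adj1 : (XComplex M).Adj (cV M g c) (cV M g c) :=
    adj_of_mem M (mem_cV_self M g c) (mem_cV_self M g c)
  have adj2 : (XComplex M).Adj (cV M g' c) (cV M g' c') :=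
    adj_of_mem M (mem_cV_self M g' c) (mem_cV_self M g' c')
  obtain ⟨x, hx⟩ := PresentedGroup.mk_surjective (artinRels M) (g⁻¹ * g')
  have hmid := reach_base M c hpick x g
  have hx' : toA M x = g⁻¹ * g' := hx
  rw [hx', mul_inv_cancel_left] at hmid
  exact (hmid.trans (Relation.ReflTransGen.single adj2)).head adj1

end Ext
section Final
variable {S : Type u} (M : CoxeterMatrix S)

lemma loop_null [DecidableEq S]
    (hpick : ∀ a b : (ghat M).ConnectedComponent, ∃ i, i ≠ a ∧ i ≠ b)
    (c₀ : (ghat M).ConnectedComponent)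
    (v u : XVertex M) (t : List (XVertex M))
    (hchain : (v :: u :: t).Chain' (XComplex M).Adj)
    (hlastv : (u :: t).getLast (by simp) = v) :
    (XComplex M).EHomotopic (v :: u :: t) [v] := by
  replace hchain := List.isChain_cons_cons.1 hchain
  obtain ⟨hadj, hchain2⟩ := hchain
  obtain ⟨x₀, hx₀v, hx₀u⟩ := exists_common_of_adj M hadj
  obtain ⟨g, c, hvrep⟩ := vertex_rep M v
  have hvx : v = cV M x₀ c := by rw [hvrep]; exact cV_eq_of_mem M (hvrep ▸ hx₀v)
  obtain ⟨ℓ, hlmem, hEH⟩ := ext_walk M c₀ t u x₀ hchain2 hx₀u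
  set y := x₀ * prodL M ℓ with hy
  have hyv : y ∈ v.1 := by rw [hlastv] at hlmem; exact hlmem
  have hyx : y ∈ (cV M x₀ c).1 := hvx ▸ hyv
  have hd : y⁻¹ * x₀ ∈ Hc M c := diff_mem_of_mem (Hc M c) hyx (mem_cV_self M x₀ c)
  set B₀ := cV M x₀ c₀ with hB₀
  set Yv := cV M y c₀ with hYv
  have hx₀B₀ : x₀ ∈ B₀.1 := mem_cV_self M x₀ c₀
  have hyYv : y ∈ Yv.1 := mem_cV_self M y c₀
  have hcVyc : cV M y c = v := by
    rw [hvx]; exact (cV_eq_of_mem M hyx).symm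
  set ℓf := ℓ ++ [⟨c, ⟨y⁻¹ * x₀, hd⟩⟩] with hℓf
  have hprod : prodL M ℓf = 1 := by
    have h1 : x₀ * prodL M ℓf = x₀ * 1 := by
      rw [hℓf, prodL_append, ← mul_assoc, ← hy]
      simp [prodL, mul_assoc]
    exact mul_left_cancel h1
  have hwkf : wk M c₀ x₀ ℓf = wk M c₀ x₀ ℓ ++ [v, B₀] := by
    rw [hℓf, wk_append M c₀ ℓ x₀, ← hy]
    have h2 : wk M c₀ y [⟨c, ⟨y⁻¹ * x₀, hd⟩⟩]
        = [Yv, v, B₀] := by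
      rw [wk_cons, wk_nil, hcVyc, mul_inv_cancel_left]
    rw [h2]
    conv_rhs => rw [wk_last M c₀ ℓ x₀, ← hy]
    simp [hYv]
  -- the explicit homotopy chain
  set td := (u :: t).dropLast with htd
  have hsplit : td ++ [v] = u :: t := by
    rw [htd, ← hlastv]
    exact List.dropLast_append_getLast (by simp)
  have e1 : (XComplex M).EHomotopic (v :: u :: t) (v :: (td ++ [v, v])) := by
    have := SComplex.EHomotopic.doubled (X := XComplex M) (v :: td) [] v
      (face_single M hx₀v)
    have h := this.symm
    have hl : (v :: td) ++ v :: [] = v :: u :: t := by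
      simp [← hsplit]
    have hr : (v :: td) ++ v :: v :: [] = v :: (td ++ [v, v]) := by simp
    rw [hl, hr] at h
    exact h
  have e2 : (XComplex M).EHomotopic (v :: (td ++ [v, v])) (v :: (td ++ [v, Yv, v])) := by
    have := SComplex.EHomotopic.triangle (X := XComplex M) (v :: td) [] v Yv v
      (face_triple M hyv hyYv hyv)
    have h := this.symm
    have hl : (v :: td) ++ v :: v :: [] = v :: (td ++ [v, v]) := by simp
    have hr : (v :: td) ++ v :: Yv :: v :: [] = v :: (td ++ [v, Yv, v]) := by simp
    rw [hl, hr] at h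
    exact h
  have e3 : (XComplex M).EHomotopic (v :: (td ++ [v, Yv, v])) (v :: (td ++ [v, Yv, v, v])) := by
    have := SComplex.EHomotopic.doubled (X := XComplex M) (v :: td ++ [v, Yv]) [] v
      (face_single M hx₀v)
    have h := this.symm
    have hl : (v :: td ++ [v, Yv]) ++ v :: [] = v :: (td ++ [v, Yv, v]) := by simp
    have hr : (v :: td ++ [v, Yv]) ++ v :: v :: [] = v :: (td ++ [v, Yv, v, v]) := by simp
    rw [hl, hr] at h
    exact h
  have e4 : (XComplex M).EHomotopic (v :: (td ++ [v, Yv, v, v]))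
      (v :: (td ++ [v, Yv, v, B₀, v])) := by
    have := SComplex.EHomotopic.triangle (X := XComplex M) (v :: td ++ [v, Yv]) [] v B₀ v
      (face_triple M hx₀v hx₀B₀ hx₀v)
    have h := this.symm
    have hl : (v :: td ++ [v, Yv]) ++ v :: v :: [] = v :: (td ++ [v, Yv, v, v]) := by simp
    have hr : (v :: td ++ [v, Yv]) ++ v :: B₀ :: v :: [] = v :: (td ++ [v, Yv, v, B₀, v]) := by
      simp
    rw [hl, hr] at h
    exact h
  have hshape : v :: (td ++ [v, Yv, v, B₀, v]) = v :: u :: (t ++ [Yv, v, B₀, v]) := by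
    have : td ++ [v, Yv, v, B₀, v] = (td ++ [v]) ++ [Yv, v, B₀, v] := by simp
    rw [this, hsplit]
    simp
  have e5 : (XComplex M).EHomotopic (v :: u :: (t ++ [Yv, v, B₀, v]))
      (v :: B₀ :: u :: (t ++ [Yv, v, B₀, v])) := by
    have := SComplex.EHomotopic.triangle (X := XComplex M) [] (t ++ [Yv, v, B₀, v]) v B₀ u
      (face_triple M hx₀v hx₀B₀ hx₀u)
    exact this.symm
  have e6 : (XComplex M).EHomotopic (v :: B₀ :: u :: (t ++ [Yv, v, B₀, v]))
      ([v] ++ wk M c₀ x₀ ℓ ++ [v, B₀, v]) := by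
    have hEH' : (XComplex M).EHomotopic (B₀ :: u :: (t ++ [Yv])) (wk M c₀ x₀ ℓ) := by
      simpa using hEH
    have := eh_ctx (XComplex M) hEH' [v] [v, B₀, v]
    have hl : [v] ++ (B₀ :: u :: (t ++ [Yv])) ++ [v, B₀, v]
        = v :: B₀ :: u :: (t ++ [Yv, v, B₀, v]) := by simp
    rw [hl] at this
    exact this
  have e7 : (XComplex M).EHomotopic ([v] ++ wk M c₀ x₀ ℓ ++ [v, B₀, v]) [v, B₀, v] := by
    have hsh : [v] ++ wk M c₀ x₀ ℓ ++ [v, B₀, v] = [v] ++ wk M c₀ x₀ ℓf ++ [v] := by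
      rw [hwkf]; simp
    rw [hsh]
    have := eh_ctx (XComplex M) (wk_null M c₀ hpick hprod x₀) [v] [v]
    have hr : [v] ++ [cV M x₀ c₀] ++ [v] = [v, B₀, v] := by simp [hB₀]
    rw [hr] at this
    exact this
  have e8 : (XComplex M).EHomotopic [v, B₀, v] [v, v] :=
    SComplex.EHomotopic.triangle (X := XComplex M) [] [] v B₀ v
      (face_triple M hx₀v hx₀B₀ hx₀v)
  have e9 : (XComplex M).EHomotopic [v, v] [v] :=
    SComplex.EHomotopic.doubled (X := XComplex M) [] [] v (face_single M hx₀v)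
  exact ((((((((e1.trans e2).trans e3).trans e4).trans (eh_of_eq _ hshape)).trans
    e5).trans e6).trans e7).trans e8).trans e9

end Final
/-- For any Artin group `A_Γ`, if `Γ̂` has at least three connected
components then the 2-complete Artin complex `X̂_Γ` is simply connected. -/
theorem twoCompleteArtinComplex_simplyConnected
    {S : Type u} [Fintype S] (M : CoxeterMatrix S)
    (hthree : ∃ c₁ c₂ c₃ : (ghat M).ConnectedComponent, c₁ ≠ c₂ ∧ c₁ ≠ c₃ ∧ c₂ ≠ c₃) :
    (XComplex M).SimplyConnected := by
  letI : DecidableEq S := Classical.decEq S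
  obtain ⟨c₁, c₂, c₃, h12, h13, h23⟩ := hthree
  have hpick : ∀ a b : (ghat M).ConnectedComponent, ∃ i, i ≠ a ∧ i ≠ b := by
    intro a b
    by_cases h1 : c₁ ≠ a ∧ c₁ ≠ b
    · exact ⟨c₁, h1⟩
    · by_cases h2 : c₂ ≠ a ∧ c₂ ≠ b
      · exact ⟨c₂, h2⟩
      · push_neg at h1 h2
        refine ⟨c₃, ?_, ?_⟩
        · intro ha
          subst ha
          have e1 : c₁ = b := h1 (fun h => h13 h)
          have e2 : c₂ = b := h2 (fun h => h23 h)
          exact h12 (e1.trans e2.symm)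
        · intro hb
          subst hb
          have e1 : c₁ = a := by
            by_contra h
            exact h13 (h1 h)
          have e2 : c₂ = a := by
            by_contra h
            exact h23 (h2 h)
          exact h12 (e1.trans e2.symm)
  refine ⟨xcomplex_connected M hpick, ?_⟩
  intro l v hw hhead hlast
  obtain ⟨hne, -, hchain⟩ := hw
  cases l with
  | nil => simp at hhead
  | cons a l'' =>
      have ha : a = v := by simpa using hhead
      subst ha
      cases l'' with
      | nil => exact SComplex.EHomotopic.refl [a]
      | cons u t =>
          have hlastv : (u :: t).getLast (by simp) = a := by
            have h1 : (a :: u :: t).getLast? =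
                some ((a :: u :: t).getLast (by simp)) :=
              List.getLast?_eq_getLast_of_ne_nil (by simp)
            rw [hlast] at h1
            have h2 : a = (a :: u :: t).getLast (by simp) := by
              exact Option.some_injective _ h1
            rw [List.getLast_cons (by simp : u :: t ≠ [])] at h2
            exact h2.symm
          exact loop_null M hpick c₁ a u t hchain hlastv

end ArtinPaper
end

section
/- Let A_Γ be a locally reducible Artin group and let R ⊆ S be a subset with |R| ≥ 3 that spans a clique in Γ and is of finite type (i.e., the Coxeter group W_R is finite). Then R is contained in a single connected component of Γ̂. -/
open scoped Pointwise

namespace ArtinPaper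

/-! ## Artin groups of labeled defining graphs

A labeled defining graph on a vertex set `S` is encoded by a `CoxeterMatrix S`:
a symmetric matrix of naturals with `1`s on the diagonal, whose off-diagonal
entries are `≥ 2` or `0`, where `M s t = 0` encodes the label `∞` (no edge). -/

variable {S : Type u}

/-! ## The 2-complete Artin complex -/

variable {S : Type u}

namespace GeomRep

open CoxeterSystem Real

noncomputable def ent (m : ℕ) : ℝ := if m = 0 then -1 else -Real.cos (Real.pi / m)

noncomputable def cval (m : ℕ) : ℝ := -(ent m)

lemma ent_one : ent 1 = 1 := by simp [ent, Real.cos_pi]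

lemma cval_eq_cos {m : ℕ} (hm : m ≠ 0) : cval m = Real.cos (Real.pi / m) := by
  simp [cval, ent, hm]

lemma cval_zero : cval 0 = 1 := by simp [cval, ent]

lemma cval_nonneg {m : ℕ} (hm : m ≠ 1) : 0 ≤ cval m := by
  rcases eq_or_ne m 0 with h | h
  · simp [h, cval_zero]
  · rw [cval_eq_cos h]
    apply Real.cos_nonneg_of_mem_Icc
    constructor
    · have hp : (0:ℝ) < Real.pi := Real.pi_pos
      have h0 : (0:ℝ) ≤ Real.pi / m := by positivity
      linarith
    · rw [div_le_iff₀ (by positivity : (0:ℝ) < (m:ℝ))]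
      have : (2:ℝ) ≤ m := by exact_mod_cast (by omega : 2 ≤ m)
      nlinarith [Real.pi_pos]

lemma cval_lt_one {m : ℕ} (hm : m ≠ 0) : cval m < 1 := by
  rw [cval_eq_cos hm]
  have hpos : (0:ℝ) < m := by exact_mod_cast Nat.pos_of_ne_zero hm
  have hne : Real.pi / m ≠ 0 := by positivity
  rcases lt_or_eq_of_le (Real.cos_le_one (Real.pi / m)) with h | h
  · exact h
  · exfalso
    apply hne
    have h2 : (1:ℝ) ≤ m := by exact_mod_cast Nat.one_le_iff_ne_zero.mpr hm
    have hlt : Real.pi / m < 2 * Real.pi := by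
      have h1 : Real.pi / m ≤ Real.pi := by
        rw [div_le_iff₀ hpos]; nlinarith [Real.pi_pos]
      nlinarith [Real.pi_pos]
    have hgt : -(2 * Real.pi) < Real.pi / m := by
      have h0 : (0:ℝ) < Real.pi / m := by positivity
      nlinarith [Real.pi_pos]
    exact (Real.cos_eq_one_iff_of_lt_of_lt hgt hlt).mp h

variable {B : Type*} [Fintype B] [DecidableEq B] (M : CoxeterMatrix B)

noncomputable def esingle (s : B) : B → ℝ := Pi.single s 1

/-- Pairing of the geometric bilinear form against the basis vector `e_s`. -/
noncomputable def bf (s : B) : (B → ℝ) →ₗ[ℝ] ℝ where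
  toFun f := ∑ x, f x * ent (M x s)
  map_add' f g := by simp [add_mul, Finset.sum_add_distrib]
  map_smul' r f := by simp [Finset.mul_sum, mul_assoc]

omit [DecidableEq B] in
lemma bf_apply (s : B) (f : B → ℝ) : bf M s f = ∑ x, f x * ent (M x s) := rfl

lemma bf_single (s t : B) : bf M s (esingle t) = ent (M t s) := by
  rw [bf_apply]
  rw [Finset.sum_eq_single t]
  · simp [esingle]
  · intro x _ hx; simp [esingle, Pi.single_apply, hx]
  · intro h; exact absurd (Finset.mem_univ t) h

lemma bf_single_self (s : B) : bf M s (esingle s) = 1 := by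
  rw [bf_single, M.diagonal, ent_one]

/-- The reflection in the geometric representation. -/
noncomputable def sigma (s : B) : Module.End ℝ (B → ℝ) where
  toFun f := f - (2 * bf M s f) • esingle s
  map_add' f g := by
    simp only [map_add]
    module
  map_smul' r f := by
    simp only [map_smul, smul_eq_mul, RingHom.id_apply]
    module

lemma sigma_apply (s : B) (f : B → ℝ) :
    sigma M s f = f - (2 * bf M s f) • esingle s := rfl

lemma bf_sigma (s : B) (f : B → ℝ) : bf M s (sigma M s f) = -(bf M s f) := by
  rw [sigma_apply]
  simp [bf_single_self]
  ring

lemma sigma_sigma (s : B) (f : B → ℝ) : sigma M s (sigma M s f) = f := by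
  rw [sigma_apply M s (sigma M s f), bf_sigma, sigma_apply]
  module

lemma sigma_fix {s : B} {f : B → ℝ} (h : bf M s f = 0) : sigma M s f = f := by
  rw [sigma_apply, h]
  simp


lemma sin_shift (u θ : ℝ) : sin (u + θ) + sin (u - θ) = 2 * cos θ * sin u := by
  rw [sin_add, sin_sub]; ring

section Plane

variable (s t : B)

/-- vector in the plane spanned by `e_s, e_t`. -/
noncomputable def pl (x y : ℝ) : B → ℝ := x • esingle s + y • esingle t

variable {M} {s t}
variable (hst : s ≠ t)

lemma ent_symm (a b : B) : ent (M a b) = ent (M b a) := by rw [M.symmetric]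

lemma bf_pl_left (x y : ℝ) : bf M s (pl s t x y) = x - cval (M s t) * y := by
  simp only [pl, map_add, map_smul, bf_single_self, bf_single, smul_eq_mul]
  rw [ent_symm]
  simp [cval]; ring

lemma bf_pl_right (x y : ℝ) : bf M t (pl s t x y) = -(cval (M s t)) * x + y := by
  simp only [pl, map_add, map_smul, bf_single_self, bf_single, smul_eq_mul]
  simp [cval]; ring

lemma sigma_pl_left (x y : ℝ) :
    sigma M s (pl s t x y) = pl s t (2 * cval (M s t) * y - x) y := by
  rw [sigma_apply, bf_pl_left]
  unfold pl
  module

lemma sigma_pl_right (x y : ℝ) :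
    sigma M t (pl s t x y) = pl s t x (2 * cval (M s t) * x - y) := by
  rw [sigma_apply, bf_pl_right]
  unfold pl
  module

lemma pl_congr {a a' b b' : ℝ} (h1 : a = a') (h2 : b = b') :
    pl s t a b = pl s t a' b' := by rw [h1, h2]

end Plane

section Lift

variable {M : CoxeterMatrix B} {s t : B} (hst : s ≠ t) (hm0 : M s t ≠ 0)

private noncomputable def θm : ℝ := Real.pi / (M s t)

lemma braid_pow_plane (hst : s ≠ t) (hm0 : M s t ≠ 0) :
    ∀ (j : ℕ) (x y : ℝ),
      ((sigma M s * sigma M t) ^ j) (pl s t x y) =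
        pl s t ((sin ((2*(j:ℝ)+1) * (Real.pi / (M s t))) * x - sin ((2*(j:ℝ)) * (Real.pi / (M s t))) * y) / sin (Real.pi / (M s t)))
               ((sin ((2*(j:ℝ)) * (Real.pi / (M s t))) * x - sin ((2*(j:ℝ)-1) * (Real.pi / (M s t))) * y) / sin (Real.pi / (M s t))) := by
  have hm1 : M s t ≠ 1 := M.off_diagonal s t hst
  set c : ℝ := cval (M s t) with hc
  set θ : ℝ := Real.pi / (M s t) with hθ
  have hmR : (2:ℝ) ≤ (M s t : ℝ) := by exact_mod_cast (by omega : 2 ≤ M s t)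
  have hθpos : 0 < θ := by rw [hθ]; positivity
  have hθlt : θ < Real.pi := by
    rw [hθ, div_lt_iff₀ (by positivity)]
    nlinarith [Real.pi_pos]
  have hs1 : 0 < sin θ := Real.sin_pos_of_pos_of_lt_pi hθpos hθlt
  have hcos : c = cos θ := by rw [hc, hθ]; exact cval_eq_cos hm0
  clear_value θ c
  intro j
  induction j with
  | zero =>
    intro x y
    simp only [pow_zero, Module.End.one_apply]
    have e1 : (2*((0:ℕ):ℝ)+1) * θ = θ := by push_cast; ring
    have e2 : (2*((0:ℕ):ℝ)) * θ = 0 := by push_cast; ring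
    have e3 : (2*((0:ℕ):ℝ)-1) * θ = -θ := by push_cast; ring
    rw [e1, e2, e3, Real.sin_zero, Real.sin_neg]
    congr 1 <;> field_simp <;> ring
  | succ j ih =>
    intro x y
    rw [pow_succ, Module.End.mul_apply, Module.End.mul_apply,
      sigma_pl_right, sigma_pl_left, ← hc, ih]
    have i1 : sin ((2*(j:ℝ)+1)*θ) * (4*c^2 - 1) - sin ((2*(j:ℝ))*θ) * (2*c) = sin ((2*(j:ℝ)+3)*θ) := by
      have h1 := sin_shift ((2*(j:ℝ)+2)*θ) θ
      have h2 := sin_shift ((2*(j:ℝ)+1)*θ) θ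
      rw [hcos]
      ring_nf at h1 h2 ⊢
      linear_combination (-1) * h1 + (-2*cos θ) * h2
    have i2 : sin ((2*(j:ℝ)+1)*θ) * (-(2*c)) + sin ((2*(j:ℝ))*θ) = -sin ((2*(j:ℝ)+2)*θ) := by
      have h2 := sin_shift ((2*(j:ℝ)+1)*θ) θ
      rw [hcos]
      ring_nf at h2 ⊢
      linear_combination h2
    have i3 : sin ((2*(j:ℝ))*θ) * (4*c^2-1) - sin ((2*(j:ℝ)-1)*θ) * (2*c) = sin ((2*(j:ℝ)+2)*θ) := by
      have h1 := sin_shift ((2*(j:ℝ)+1)*θ) θ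
      have h2 := sin_shift ((2*(j:ℝ))*θ) θ
      rw [hcos]
      ring_nf at h1 h2 ⊢
      linear_combination (-1) * h1 + (-2*cos θ) * h2
    have i4 : sin ((2*(j:ℝ))*θ) * (-(2*c)) + sin ((2*(j:ℝ)-1)*θ) = -sin ((2*(j:ℝ)+1)*θ) := by
      have h2 := sin_shift ((2*(j:ℝ))*θ) θ
      rw [hcos]
      ring_nf at h2 ⊢
      linear_combination h2
    refine pl_congr ?_ ?_
    · rw [div_eq_div_iff hs1.ne' hs1.ne']
      push_cast
      ring_nf
      ring_nf at i1 i2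
      linear_combination (x * i1 + y * i2) * sin θ
    · rw [div_eq_div_iff hs1.ne' hs1.ne']
      push_cast
      ring_nf
      ring_nf at i3 i4
      linear_combination (x * i3 + y * i4) * sin θ

end Lift

section Part2
variable {M : CoxeterMatrix B}

lemma braid_sigma {s t : B} (hst : s ≠ t) (hm0 : M s t ≠ 0) :
    (sigma M s * sigma M t) ^ (M s t) = 1 := by
  have hm1 : M s t ≠ 1 := M.off_diagonal s t hst
  set c : ℝ := cval (M s t) with hc
  have hc0 : 0 ≤ c := cval_nonneg hm1
  have hc1 : c < 1 := cval_lt_one hm0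
  have hd : (1:ℝ) - c^2 ≠ 0 := by nlinarith
  apply LinearMap.ext
  intro v
  set a : ℝ := (bf M s v + c * bf M t v)/(1 - c^2) with ha
  set b : ℝ := (bf M t v + c * bf M s v)/(1 - c^2) with hb
  set r : (B → ℝ) := v - pl s t a b with hr
  have hbfs : bf M s r = 0 := by
    rw [hr, map_sub, bf_pl_left, ← hc, ha, hb]
    field_simp
    ring
  have hbft : bf M t r = 0 := by
    rw [hr, map_sub, bf_pl_right, ← hc, ha, hb]
    field_simp
    ring
  have hfix : ∀ j : ℕ, ((sigma M s * sigma M t) ^ j) r = r := by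
    intro j
    induction j with
    | zero => simp
    | succ j ih =>
      rw [pow_succ, Module.End.mul_apply, Module.End.mul_apply, sigma_fix M hbft, sigma_fix M hbfs, ih]
  have hv : v = pl s t a b + r := by rw [hr]; abel
  have hplane : ((sigma M s * sigma M t) ^ (M s t)) (pl s t a b) = pl s t a b := by
    rw [braid_pow_plane hst hm0 (M s t) a b]
    have hmne : ((M s t : ℝ)) ≠ 0 := by exact_mod_cast hm0
    have h2m : (2*((M s t : ℕ):ℝ)) * (Real.pi / (M s t)) = 2 * Real.pi := by
      field_simp
    have h2m1 : (2*((M s t : ℕ):ℝ)+1) * (Real.pi / (M s t)) = Real.pi / (M s t) + 2 * Real.pi := by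
      field_simp; ring
    have h2m2 : (2*((M s t : ℕ):ℝ)-1) * (Real.pi / (M s t)) = 2 * Real.pi - Real.pi / (M s t) := by
      field_simp
    rw [h2m, h2m1, h2m2, Real.sin_add_two_pi, Real.sin_two_pi, Real.sin_two_pi_sub]
    have hθpos : 0 < Real.pi / (M s t) := by
      have : (0:ℝ) < (M s t : ℝ) := by positivity
      positivity
    have hθlt : Real.pi / (M s t) < Real.pi := by
      rw [div_lt_iff₀ (by positivity)]
      have hmR : (2:ℝ) ≤ (M s t : ℝ) := by exact_mod_cast (by omega : 2 ≤ M s t)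
      nlinarith [Real.pi_pos]
    have hs1 : 0 < sin (Real.pi / (M s t)) := Real.sin_pos_of_pos_of_lt_pi hθpos hθlt
    refine pl_congr ?_ ?_ <;> field_simp <;> ring
  rw [Module.End.one_apply, hv, map_add, hplane, hfix]

theorem isLiftable : M.IsLiftable (fun s => sigma M s) := by
  intro i i'
  rcases eq_or_ne i i' with rfl | hne
  · rw [M.diagonal, pow_one]
    apply LinearMap.ext
    intro v
    rw [Module.End.mul_apply, sigma_sigma, Module.End.one_apply]
  · rcases eq_or_ne (M i i') 0 with h0 | h0
    · rw [h0, pow_zero]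
    · exact braid_sigma hne h0

end Part2


section Rep

variable {B : Type*} [Fintype B] [DecidableEq B] (M : CoxeterMatrix B)

local notation "cs" => CoxeterMatrix.toCoxeterSystem M

/-- The geometric representation. -/
noncomputable def rho : M.Group →* Module.End ℝ (B → ℝ) :=
  (CoxeterMatrix.toCoxeterSystem M).lift ⟨fun s => sigma M s, isLiftable⟩

lemma rho_simple (s : B) : rho M ((cs).simple s) = sigma M s := by
  unfold rho
  exact CoxeterSystem.lift_apply_simple _ isLiftable s

lemma sin_pi_div_pos {m : ℕ} (hm0 : m ≠ 0) (hm1 : m ≠ 1) : 0 < Real.sin (Real.pi / m) := by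
  have hmR : (2:ℝ) ≤ (m : ℝ) := by exact_mod_cast (by omega : 2 ≤ m)
  apply Real.sin_pos_of_pos_of_lt_pi
  · positivity
  · rw [div_lt_iff₀ (by positivity)]
    nlinarith [Real.pi_pos]

noncomputable def Useq (m : ℕ) (j : ℕ) : ℝ :=
  if m = 0 then (j : ℝ) else Real.sin (j * (Real.pi / m)) / Real.sin (Real.pi / m)

lemma Useq_zero (m : ℕ) : Useq m 0 = 0 := by
  unfold Useq
  split <;> simp

lemma Useq_one {m : ℕ} (hm1 : m ≠ 1) : Useq m 1 = 1 := by
  unfold Useq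
  rcases eq_or_ne m 0 with h | h
  · simp [h]
  · rw [if_neg h]
    rw [Nat.cast_one, one_mul, div_self (sin_pi_div_pos h hm1).ne']

lemma Useq_rec {m : ℕ} (hm1 : m ≠ 1) (j : ℕ) :
    Useq m (j+2) = 2 * cval m * Useq m (j+1) - Useq m j := by
  unfold Useq
  rcases eq_or_ne m 0 with h | h
  · rw [if_pos h, if_pos h, if_pos h, h, cval_zero]
    push_cast; ring
  · rw [if_neg h, if_neg h, if_neg h, cval_eq_cos h]
    have hs := sin_pi_div_pos h hm1
    set θ := Real.pi / m with hθ
    clear_value θ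
    have key := sin_shift (((j:ℝ)+1) * θ) θ
    field_simp
    push_cast
    ring_nf
    ring_nf at key
    linear_combination key


lemma Useq_nonneg {m : ℕ} (hm1 : m ≠ 1) {j : ℕ} (hj : m = 0 ∨ j ≤ m) : 0 ≤ Useq m j := by
  unfold Useq
  rcases eq_or_ne m 0 with h | h
  · rw [if_pos h]; positivity
  · rw [if_neg h]
    have hs := sin_pi_div_pos h hm1
    apply div_nonneg _ hs.le
    apply Real.sin_nonneg_of_nonneg_of_le_pi
    · positivity
    · rcases hj with h0 | hj
      · exact absurd h0 h
      · have hjm : (j:ℝ) ≤ m := by exact_mod_cast hj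
        have hmpos : (0:ℝ) < (m:ℝ) := by
          exact_mod_cast Nat.pos_of_ne_zero h
        have h1 : (j:ℝ) * (Real.pi/m) ≤ (m:ℝ) * (Real.pi/m) :=
          mul_le_mul_of_nonneg_right hjm (by positivity)
        have h2 : (m:ℝ) * (Real.pi/m) = Real.pi := by field_simp
        linarith

lemma rho_alt {s t : B} (hst : s ≠ t) (q : ℕ) :
    rho M ((cs).wordProd (CoxeterSystem.alternatingWord s t q)) (esingle s) =
      if Even q then pl s t (Useq (M s t) (q+1)) (Useq (M s t) q)
      else pl s t (Useq (M s t) q) (Useq (M s t) (q+1)) := by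
  have hm1 : M s t ≠ 1 := M.off_diagonal s t hst
  induction q with
  | zero =>
    rw [if_pos (Even.zero)]
    simp only [CoxeterSystem.alternatingWord, CoxeterSystem.wordProd_nil, map_one,
      Module.End.one_apply, Useq_zero, Useq_one hm1]
    unfold pl
    module
  | succ q ih =>
    rw [CoxeterSystem.alternatingWord_succ', CoxeterSystem.wordProd_cons, map_mul,
      Module.End.mul_apply, ih]
    rcases Nat.even_or_odd q with hq | hq
    all_goals have h22 : q + 1 + 1 = q + 2 := rfl
    · have hodd : ¬ Even (q+1) := by rw [Nat.even_add_one, not_not]; exact hq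
      rw [if_pos hq, if_neg hodd, rho_simple, if_pos hq, sigma_pl_right, h22, Useq_rec hm1]
    · have hnev : ¬ Even q := Nat.not_even_iff_odd.mpr hq
      have hev : Even (q+1) := Nat.even_add_one.mpr hnev
      rw [if_neg hnev, if_pos hev, rho_simple, if_neg hnev, sigma_pl_left, h22, Useq_rec hm1]

open CoxeterSystem List

lemma strip (s t : B) (w : M.Group) :
    ∃ (u : M.Group) (χ : List B), (∀ x ∈ χ, x = s ∨ x = t) ∧
      w = u * (cs).wordProd χ ∧ (cs).length u + χ.length = (cs).length w ∧
      ¬(cs).IsRightDescent u s ∧ ¬(cs).IsRightDescent u t := by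
  generalize hn : (cs).length w = n
  induction n using Nat.strong_induction_on generalizing w with
  | _ n IH =>
  by_cases hs : (cs).IsRightDescent w s
  case pos =>
    have hlen : (cs).length (w * (cs).simple s) + 1 = (cs).length w := by
      rcases (cs).length_mul_simple w s with h | h
      · exfalso
        have h2 := hs
        unfold CoxeterSystem.IsRightDescent at h2
        omega
      · exact h
    obtain ⟨u, χ, hmem, heq, hl, hu1, hu2⟩ :=
      IH ((cs).length (w * (cs).simple s)) (by omega) (w * (cs).simple s) rfl
    refine ⟨u, χ ++ [s], ?_, ?_, ?_, hu1, hu2⟩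
    · intro x hx
      rcases List.mem_append.mp hx with h | h
      · exact hmem x h
      · simp at h; left; exact h
    · rw [CoxeterSystem.wordProd_append, CoxeterSystem.wordProd_singleton, ← mul_assoc, ← heq,
        CoxeterSystem.simple_mul_simple_cancel_right]
    · simp only [List.length_append, List.length_singleton]
      omega
  case neg =>
  by_cases ht : (cs).IsRightDescent w t
  case pos =>
    have hlen : (cs).length (w * (cs).simple t) + 1 = (cs).length w := by
      rcases (cs).length_mul_simple w t with h | h
      · exfalso
        have h2 := ht
        unfold CoxeterSystem.IsRightDescent at h2
        omega
      · exact h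
    obtain ⟨u, χ, hmem, heq, hl, hu1, hu2⟩ :=
      IH ((cs).length (w * (cs).simple t)) (by omega) (w * (cs).simple t) rfl
    refine ⟨u, χ ++ [t], ?_, ?_, ?_, hu1, hu2⟩
    · intro x hx
      rcases List.mem_append.mp hx with h | h
      · exact hmem x h
      · simp at h; right; exact h
    · rw [CoxeterSystem.wordProd_append, CoxeterSystem.wordProd_singleton, ← mul_assoc, ← heq,
        CoxeterSystem.simple_mul_simple_cancel_right]
    · simp only [List.length_append, List.length_singleton]
      omega
  case neg =>
    exact ⟨w, [], by simp, by simp [CoxeterSystem.wordProd_nil], by simp [hn], hs, ht⟩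

lemma two_letter_reduced_alternating {s t : B} (hst : s ≠ t) :
    ∀ (χ : List B), (∀ x ∈ χ, x = s ∨ x = t) →
      (cs).length ((cs).wordProd χ) = χ.length →
      χ = CoxeterSystem.alternatingWord s t χ.length ∨
        χ = CoxeterSystem.alternatingWord t s χ.length := by
  intro χ
  induction χ using List.reverseRecOn with
  | nil => intro _ _; left; rfl
  | append_singleton χ₀ y ih =>
    intro hmem hred
    have hy : y = s ∨ y = t := hmem y (by simp)
    have hmem₀ : ∀ x ∈ χ₀, x = s ∨ x = t := fun x hx => hmem x (by simp [hx])
    have hlχ : (cs).length ((cs).wordProd (χ₀ ++ [y])) = χ₀.length + 1 := by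
      simpa using hred
    have hsplit : (cs).wordProd (χ₀ ++ [y]) = (cs).wordProd χ₀ * (cs).simple y := by
      rw [CoxeterSystem.wordProd_append, CoxeterSystem.wordProd_singleton]
    have hred₀ : (cs).length ((cs).wordProd χ₀) = χ₀.length := by
      have h1 := (cs).length_wordProd_le χ₀
      have h2 : (cs).length ((cs).wordProd (χ₀ ++ [y])) ≤ (cs).length ((cs).wordProd χ₀) + 1 := by
        rw [hsplit]
        calc (cs).length ((cs).wordProd χ₀ * (cs).simple y)
            ≤ (cs).length ((cs).wordProd χ₀) + (cs).length ((cs).simple y) :=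
              (cs).length_mul_le _ _
          _ = (cs).length ((cs).wordProd χ₀) + 1 := by rw [(cs).length_simple]
      omega
    rcases ih hmem₀ hred₀ with h₀ | h₀
    · -- χ₀ = alternatingWord s t n
      rcases Nat.eq_zero_or_pos χ₀.length with h0 | hpos
      · rw [List.length_eq_zero_iff.mp h0]
        rcases hy with rfl | rfl
        · right
          simp only [List.nil_append, List.length_cons, List.length_nil]
          rw [CoxeterSystem.alternatingWord_succ]
          rfl
        · left
          simp only [List.nil_append, List.length_cons, List.length_nil]
          rw [CoxeterSystem.alternatingWord_succ]
          rfl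
      · obtain ⟨k, hk⟩ : ∃ k, χ₀.length = k + 1 := ⟨χ₀.length - 1, by omega⟩
        -- χ₀ ends with t; y must be s
        have hyt : y ≠ t := by
          intro hyy
          have hww : (cs).wordProd χ₀ * (cs).simple y =
              (cs).wordProd (CoxeterSystem.alternatingWord t s k) := by
            rw [hyy, h₀, hk, CoxeterSystem.alternatingWord_succ, CoxeterSystem.wordProd_concat,
              CoxeterSystem.simple_mul_simple_cancel_right]
          have hle := (cs).length_wordProd_le (CoxeterSystem.alternatingWord t s k)
          rw [CoxeterSystem.length_alternatingWord] at hle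
          rw [hsplit, hww] at hlχ
          omega
        have hys : y = s := by tauto
        right
        subst hys
        rw [h₀]
        simp only [List.length_append, List.length_singleton]
        rw [CoxeterSystem.alternatingWord_succ]
        rw [List.concat_eq_append, CoxeterSystem.length_alternatingWord]
    · -- mirrored: χ₀ = alternatingWord t s n
      rcases Nat.eq_zero_or_pos χ₀.length with h0 | hpos
      · rw [List.length_eq_zero_iff.mp h0]
        rcases hy with rfl | rfl
        · right
          simp only [List.nil_append, List.length_cons, List.length_nil]
          rw [CoxeterSystem.alternatingWord_succ]
          rfl
        · left
          simp only [List.nil_append, List.length_cons, List.length_nil]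
          rw [CoxeterSystem.alternatingWord_succ]
          rfl
      · obtain ⟨k, hk⟩ : ∃ k, χ₀.length = k + 1 := ⟨χ₀.length - 1, by omega⟩
        have hys : y ≠ s := by
          intro hyy
          have hww : (cs).wordProd χ₀ * (cs).simple y =
              (cs).wordProd (CoxeterSystem.alternatingWord s t k) := by
            rw [hyy, h₀, hk, CoxeterSystem.alternatingWord_succ, CoxeterSystem.wordProd_concat,
              CoxeterSystem.simple_mul_simple_cancel_right]
          have hle := (cs).length_wordProd_le (CoxeterSystem.alternatingWord s t k)
          rw [CoxeterSystem.length_alternatingWord] at hle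
          rw [hsplit, hww] at hlχ
          omega
        have hyt : y = t := by tauto
        left
        subst hyt
        rw [h₀]
        simp only [List.length_append, List.length_singleton]
        rw [CoxeterSystem.alternatingWord_succ]
        rw [List.concat_eq_append, CoxeterSystem.length_alternatingWord]

lemma sigma_single_self (s : B) : sigma M s (esingle s) = - esingle s := by
  rw [sigma_apply, bf_single_self]
  module

theorem rho_nonneg :
    ∀ (n : ℕ) (w : M.Group), (cs).length w = n → ∀ s : B, ¬(cs).IsRightDescent w s →
      ∀ x : B, 0 ≤ rho M w (esingle s) x := by
  intro n
  induction n using Nat.strong_induction_on with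
  | _ n IH =>
  intro w hn s hds x
  rcases eq_or_ne w 1 with rfl | hw
  · rw [map_one]
    simp only [Module.End.one_apply]
    unfold esingle
    rcases eq_or_ne x s with rfl | hx
    · simp
    · rw [Pi.single_apply, if_neg hx]
  · obtain ⟨t, ht⟩ := (cs).exists_rightDescent_of_ne_one hw
    have hst : s ≠ t := fun h => hds (h ▸ ht)
    obtain ⟨u, χ, hmem, hw', hlen, hus, hut⟩ := strip M s t w
    have hχne : χ ≠ [] := by
      rintro rfl
      rw [CoxeterSystem.wordProd_nil, mul_one] at hw'
      exact hut (hw' ▸ ht)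
    have hq0 : 0 < χ.length := List.length_pos_iff.mpr hχne
    have hπle := (cs).length_wordProd_le χ
    have hmul : (cs).length w ≤ (cs).length u + (cs).length ((cs).wordProd χ) := by
      rw [hw']; exact (cs).length_mul_le _ _
    have hred : (cs).length ((cs).wordProd χ) = χ.length := by omega
    have hws : (cs).length (w * (cs).simple s) = (cs).length w + 1 := by
      rcases (cs).length_mul_simple w s with h | h
      · exact h
      · exfalso; apply hds; unfold CoxeterSystem.IsRightDescent; omega
    have h2 : (cs).length ((cs).wordProd χ * (cs).simple s) = χ.length + 1 := by
      have hle : (cs).length ((cs).wordProd χ * (cs).simple s) ≤ χ.length + 1 := by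
        calc (cs).length ((cs).wordProd χ * (cs).simple s)
            ≤ (cs).length ((cs).wordProd χ) + (cs).length ((cs).simple s) :=
              (cs).length_mul_le _ _
          _ ≤ χ.length + 1 := by rw [(cs).length_simple]; omega
      have hge : (cs).length w + 1 ≤ (cs).length u + (cs).length ((cs).wordProd χ * (cs).simple s) := by
        rw [← hws, hw', mul_assoc]; exact (cs).length_mul_le _ _
      omega
    rcases two_letter_reduced_alternating M hst χ hmem hred with halt | halt
    swap
    · exfalso
      obtain ⟨k, hk⟩ : ∃ k, χ.length = k + 1 := ⟨χ.length - 1, by omega⟩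
      have hb : (cs).wordProd χ * (cs).simple s =
          (cs).wordProd (CoxeterSystem.alternatingWord s t k) := by
        rw [halt, hk, CoxeterSystem.alternatingWord_succ, CoxeterSystem.wordProd_concat,
          CoxeterSystem.simple_mul_simple_cancel_right]
      rw [hb] at h2
      have hle := (cs).length_wordProd_le (CoxeterSystem.alternatingWord s t k)
      rw [CoxeterSystem.length_alternatingWord] at hle
      omega
    have hm1 : M s t ≠ 1 := M.off_diagonal s t hst
    have hqm : M s t = 0 ∨ χ.length + 1 ≤ M s t := by
      rcases eq_or_ne (M s t) 0 with h0 | h0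
      · left; exact h0
      · right
        have hq_le : χ.length ≤ M s t := by
          by_contra hgt
          have hr2 : (cs).IsReduced χ := by
            unfold CoxeterSystem.IsReduced
            exact hred
          rw [halt] at hr2
          exact (cs).not_isReduced_alternatingWord s t h0 (by omega) hr2
        rcases eq_or_ne χ.length (M s t) with heq | hne
        · exfalso
          have hmsym : M t s = M s t := CoxeterMatrix.symmetric M t s
          obtain ⟨k, hk⟩ : ∃ k, M s t = k + 1 := ⟨M s t - 1, by omega⟩
          have hb : (cs).wordProd χ = (cs).wordProd (CoxeterSystem.alternatingWord s t k) * (cs).simple s := by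
            rw [halt, heq]
            rw [show CoxeterSystem.alternatingWord s t (M s t) = CoxeterSystem.braidWord M s t from rfl]
            rw [(cs).wordProd_braidWord_eq]
            unfold CoxeterSystem.braidWord
            rw [hmsym, hk, CoxeterSystem.alternatingWord_succ, CoxeterSystem.wordProd_concat]
          rw [hb, CoxeterSystem.simple_mul_simple_cancel_right] at h2
          have hle := (cs).length_wordProd_le (CoxeterSystem.alternatingWord s t k)
          rw [CoxeterSystem.length_alternatingWord] at hle
          omega
        · omega
    have hco := rho_alt M hst χ.length
    rw [← halt] at hco
    have hU1 : 0 ≤ Useq (M s t) χ.length := by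
      apply Useq_nonneg hm1
      rcases hqm with h | h
      · left; exact h
      · right; omega
    have hU2 : 0 ≤ Useq (M s t) (χ.length+1) := Useq_nonneg hm1 hqm
    have hues := IH ((cs).length u) (by omega) u rfl s hus
    have huet := IH ((cs).length u) (by omega) u rfl t hut
    rw [hw', map_mul, Module.End.mul_apply, hco]
    rcases Nat.even_or_odd χ.length with hq | hq
    · rw [if_pos hq]
      unfold pl
      rw [map_add, map_smul, map_smul]
      simp only [Pi.add_apply, Pi.smul_apply, smul_eq_mul]
      exact add_nonneg (mul_nonneg hU2 (hues x)) (mul_nonneg hU1 (huet x))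
    · rw [if_neg (Nat.not_even_iff_odd.mpr hq)]
      unfold pl
      rw [map_add, map_smul, map_smul]
      simp only [Pi.add_apply, Pi.smul_apply, smul_eq_mul]
      exact add_nonneg (mul_nonneg hU1 (hues x)) (mul_nonneg hU2 (huet x))

theorem rho_ker (w : M.Group) (h : rho M w = 1) : w = 1 := by
  by_contra hw
  obtain ⟨s, hs⟩ := (cs).exists_rightDescent_of_ne_one hw
  have hnd : ¬(cs).IsRightDescent (w * (cs).simple s) s := by
    unfold CoxeterSystem.IsRightDescent at *
    rw [CoxeterSystem.simple_mul_simple_cancel_right]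
    omega
  have hpos := rho_nonneg M _ (w * (cs).simple s) rfl s hnd s
  have heq : rho M w (esingle s) = - (rho M (w * (cs).simple s)) (esingle s) := by
    nth_rewrite 1 [← (cs).simple_mul_simple_cancel_right (w := w) s]
    rw [map_mul, Module.End.mul_apply, rho_simple, sigma_single_self, map_neg]
  rw [h] at heq
  simp only [Module.End.one_apply] at heq
  have hc := congrFun heq s
  simp only [Pi.neg_apply] at hc
  have h1 : esingle s s = (1:ℝ) := by
    unfold esingle; simp
  rw [h1] at hc
  linarith

end Rep


section Transfer

variable {B₁ B₂ : Type*} [Fintype B₁] [DecidableEq B₁] [Fintype B₂] [DecidableEq B₂]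
variable (M₁ : CoxeterMatrix B₁) (M₂ : CoxeterMatrix B₂)
variable (ι : B₁ → B₂)

/-- The homomorphism between Coxeter groups induced by a label-preserving map of indices. -/
noncomputable def mapHom (hlab : ∀ x y, M₂ (ι x) (ι y) = M₁ x y) : M₁.Group →* M₂.Group :=
  (CoxeterMatrix.toCoxeterSystem M₁).lift
    ⟨fun x => (CoxeterMatrix.toCoxeterSystem M₂).simple (ι x), by
      intro i i'
      rw [← hlab i i']
      exact (CoxeterMatrix.toCoxeterSystem M₂).simple_mul_simple_pow (ι i) (ι i')⟩

lemma mapHom_simple (hlab : ∀ x y, M₂ (ι x) (ι y) = M₁ x y) (i : B₁) :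
    mapHom M₁ M₂ ι hlab ((CoxeterMatrix.toCoxeterSystem M₁).simple i) =
      (CoxeterMatrix.toCoxeterSystem M₂).simple (ι i) := by
  unfold mapHom
  exact CoxeterSystem.lift_apply_simple _ _ i

/-- Extension by zero along `ι`. -/
noncomputable def jmap : (B₁ → ℝ) →ₗ[ℝ] (B₂ → ℝ) where
  toFun f := fun y => ∑ x, f x * esingle (ι x) y
  map_add' f g := by
    funext y
    simp [add_mul, Finset.sum_add_distrib]
  map_smul' r f := by
    funext y
    simp [Finset.mul_sum, mul_assoc]

lemma jmap_single (x : B₁) : jmap ι (esingle x) = esingle (ι x) := by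
  funext y
  show ∑ x', esingle x x' * esingle (ι x') y = esingle (ι x) y
  rw [Finset.sum_eq_single x]
  · simp [esingle]
  · intro b _ hb
    simp [esingle, Pi.single_apply, hb]
  · intro h; exact absurd (Finset.mem_univ x) h

lemma jmap_injective (hι : Function.Injective ι) : Function.Injective (jmap ι) := by
  intro f g h
  funext x
  have h1 : ∀ f : B₁ → ℝ, jmap ι f (ι x) = f x := by
    intro f
    show ∑ x', f x' * esingle (ι x') (ι x) = f x
    rw [Finset.sum_eq_single x]
    · simp [esingle]
    · intro b _ hb
      have : ι b ≠ ι x := fun hc => hb (hι hc)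
      simp [esingle, Pi.single_apply, this]
    · intro h; exact absurd (Finset.mem_univ x) h
  rw [← h1 f, ← h1 g, h]

lemma bf_jmap (hlab : ∀ x y, M₂ (ι x) (ι y) = M₁ x y) (s : B₁) (f : B₁ → ℝ) :
    bf M₂ (ι s) (jmap ι f) = bf M₁ s f := by
  show ∑ y, (∑ x, f x * esingle (ι x) y) * ent (M₂ y (ι s)) = ∑ x, f x * ent (M₁ x s)
  simp only [Finset.sum_mul]
  rw [Finset.sum_comm]
  apply Finset.sum_congr rfl
  intro x _
  rw [Finset.sum_eq_single (ι x)]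
  · simp [esingle, hlab]
  · intro b _ hb
    simp [esingle, Pi.single_apply, Ne.symm hb]
  · intro h; exact absurd (Finset.mem_univ _) h

lemma sigma_jmap (hlab : ∀ x y, M₂ (ι x) (ι y) = M₁ x y) (s : B₁) (f : B₁ → ℝ) :
    sigma M₂ (ι s) (jmap ι f) = jmap ι (sigma M₁ s f) := by
  rw [sigma_apply, sigma_apply, bf_jmap M₁ M₂ ι hlab, map_sub, map_smul, jmap_single]

lemma rho_jmap (hlab : ∀ x y, M₂ (ι x) (ι y) = M₁ x y) (w : M₁.Group) (f : B₁ → ℝ) :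
    rho M₂ (mapHom M₁ M₂ ι hlab w) (jmap ι f) = jmap ι (rho M₁ w f) := by
  induction w using CoxeterSystem.simple_induction (cs := CoxeterMatrix.toCoxeterSystem M₁)
    generalizing f with
  | simple i =>
    rw [mapHom_simple, rho_simple, rho_simple, sigma_jmap M₁ M₂ ι hlab]
  | one => simp
  | mul w w' ih ih' =>
    rw [map_mul, map_mul, map_mul, Module.End.mul_apply, Module.End.mul_apply, ih', ih]

theorem mapHom_injective (hι : Function.Injective ι)
    (hlab : ∀ x y, M₂ (ι x) (ι y) = M₁ x y) :
    Function.Injective (mapHom M₁ M₂ ι hlab) := by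
  rw [injective_iff_map_eq_one]
  intro w hw
  apply rho_ker M₁
  apply LinearMap.ext
  intro f
  apply jmap_injective ι hι
  rw [← rho_jmap M₁ M₂ ι hlab, hw, map_one]
  simp

end Transfer
end GeomRep


open GeomRep in
lemma finiteType_mono {S : Type u} [Fintype S] (M : CoxeterMatrix S) {T R : Set S}
    (hTR : T ⊆ R) (hft : FiniteType M R) : FiniteType M T := by
  classical
  unfold FiniteType at *
  haveI : Finite (restrictMatrix M R).Group := hft
  haveI : Fintype ↥T := Fintype.ofFinite ↥T
  haveI : Fintype ↥R := Fintype.ofFinite ↥R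
  exact Finite.of_injective _
    (mapHom_injective (restrictMatrix M T) (restrictMatrix M R) (Set.inclusion hTR)
      (Set.inclusion_injective hTR) (fun x y => rfl))

/-- Let `A_Γ` be locally reducible and let `R ⊆ S` with `|R| ≥ 3` span a
finite-type clique in `Γ`. Then `R` is contained in a single connected component of `Γ̂`. -/
theorem finiteType_clique_subset_component
    {S : Type u} [Fintype S] (M : CoxeterMatrix S)
    (hLR : LocallyReducible M)
    (R : Set S) (hcard : 3 ≤ R.ncard)
    (hclique : ∀ s ∈ R, ∀ t ∈ R, s ≠ t → M s t ≠ 0)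
    (hft : FiniteType M R) :
    ∃ c : (ghat M).ConnectedComponent, R ⊆ c.supp := by
  classical
  have key : ∀ a ∈ R, ∀ b ∈ R, (ghat M).Reachable a b := by
    intro a ha b hb
    rcases eq_or_ne a b with rfl | hab
    · exact SimpleGraph.Reachable.refl a
    rcases eq_or_ne (M a b) 2 with h2 | h2
    · exact SimpleGraph.Adj.reachable ⟨hab, h2⟩
    · have hex : (R \ {a, b}).Nonempty := by
        rw [Set.nonempty_iff_ne_empty]
        intro h
        rw [Set.diff_eq_empty] at h
        have h1 : R.ncard ≤ ({a, b} : Set S).ncard :=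
          Set.ncard_le_ncard h (Set.toFinite _)
        have h2' : ({a, b} : Set S).ncard ≤ 2 := by
          have := Set.ncard_insert_le a ({b} : Set S)
          simpa [Set.ncard_singleton] using this
        omega
      obtain ⟨c, hcR, hc⟩ := hex
      have hca : c ≠ a := by intro h; exact hc (by simp [h])
      have hcb : c ≠ b := by intro h; exact hc (by simp [h])
      have hsub : ({a, b, c} : Set S) ⊆ R := by
        intro x hx
        rcases hx with rfl | rfl | rfl
        · exact ha
        · exact hb
        · exact hcR
      have hft3 : FiniteType M {a, b, c} := finiteType_mono M hsub hft
      have hpat := hLR a b c hab (Ne.symm hca) (Ne.symm hcb)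
        (hclique a ha b hb hab)
        (hclique a ha c hcR (Ne.symm hca))
        (hclique b hb c hcR (Ne.symm hcb))
        hft3
      rcases hpat with ⟨h1, _⟩ | ⟨h1, _⟩ | ⟨h1, h2''⟩
      · exact absurd h1 h2
      · exact absurd h1 h2
      · have hac : (ghat M).Adj a c := ⟨Ne.symm hca, h1⟩
        have hbc : (ghat M).Adj b c := ⟨Ne.symm hcb, h2''⟩
        exact hac.reachable.trans hbc.symm.reachable
  have hRne : R.Nonempty := by
    rcases Set.eq_empty_or_nonempty R with h | h
    · rw [h, Set.ncard_empty] at hcard; omega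
    · exact h
  obtain ⟨a₀, ha₀⟩ := hRne
  refine ⟨(ghat M).connectedComponentMk a₀, ?_⟩
  intro b hb
  rw [SimpleGraph.ConnectedComponent.mem_supp_iff]
  exact SimpleGraph.ConnectedComponent.sound (key b hb a₀ ha₀)


end ArtinPaper
end
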